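/- Let Γ be a finite directed graph containing an edge a that is a directed circuit of length one (a loop), let m ≥ 1, and let L = L_{a^m,d} be the corresponding closed inverse subsemigroup of cycle type in S(Γ). Suppose that, apart from powers of the loop a, there are no other directed circuits in Γ attached to (accessible from) a vertex of d. Then L has finite index in S(Γ), and [S(Γ):L] = (m−1)·N^Γ_{b,a} + Σ_{v ∈ V(d)} N^{Γ∖{a}}_{v,d}, where b is the vertex of the loop a, N^Γ_{b,a} is the number of directed paths in Γ with initial vertex b whose first edge is not a, and for each vertex v of d, N^{Γ∖{a}}_{v,d} is the number of directed paths in the graph Γ with the edge a deleted whose initial vertex is v and whose first edge is not an edge of d. -/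

import Mathlib

/-- A (finite) directed graph: vertices, edges, and source/target maps. -/
structure DGraph where
  V : Type
  E : Type
  src : E → V
  tgt : E → V

namespace DGraph

/-- The vertex reached after traversing a list of edges from a vertex. -/
def walkEnd (G : DGraph) : G.V → List G.E → G.V
  | v, [] => v
  | _, e :: l => walkEnd G (G.tgt e) l

/-- The list of edges forms a directed walk starting at the given vertex. -/
def IsWalk (G : DGraph) : G.V → List G.E → Prop
  | _, [] => True
  | v, e :: l => G.src e = v ∧ IsWalk G (G.tgt e) l

variable (G : DGraph)

@[simp] theorem walkEnd_nil (v : G.V) : G.walkEnd v [] = v := rfl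
@[simp] theorem walkEnd_cons (v : G.V) (e : G.E) (l : List G.E) :
    G.walkEnd v (e :: l) = G.walkEnd (G.tgt e) l := rfl
@[simp] theorem isWalk_nil (v : G.V) : G.IsWalk v [] := trivial
@[simp] theorem isWalk_cons (v : G.V) (e : G.E) (l : List G.E) :
    G.IsWalk v (e :: l) ↔ G.src e = v ∧ G.IsWalk (G.tgt e) l := Iff.rfl

theorem isWalk_append (v : G.V) (l1 l2 : List G.E) :
    G.IsWalk v (l1 ++ l2) ↔ G.IsWalk v l1 ∧ G.IsWalk (G.walkEnd v l1) l2 := by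
  induction l1 generalizing v with
  | nil => simp [IsWalk, walkEnd]
  | cons e l ih => simp [IsWalk, walkEnd, ih, and_assoc]

/-- A directed path in `G`: an initial vertex together with a compatible
list of edges, traversed in order (empty paths are allowed). -/
structure DPath (G : DGraph) where
  first : G.V
  edges : List G.E
  wf : G.IsWalk first edges

namespace DPath

variable {G}

/-- The terminal vertex of a directed path. -/
def last (p : G.DPath) : G.V := G.walkEnd p.first p.edges

/-- The list of vertices lying on a directed path. -/
def vertexList (p : G.DPath) : List G.V := p.first :: p.edges.map G.tgt

/-- `q` is a suffix (terminal segment) of `p`: `p = l ⬝ q` for some edge list `l`. -/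
def IsSuffixOf (q p : G.DPath) : Prop :=
  ∃ l : List G.E, p.edges = l ++ q.edges ∧ q.first = G.walkEnd p.first l

end DPath

theorem isWalk_chopAppend {u v w : G.DPath} (hs : v.IsSuffixOf u) (hvw : v.first = w.first) :
    G.IsWalk u.first (u.edges.take (u.edges.length - v.edges.length) ++ w.edges) := by
  obtain ⟨l, hl, hfst⟩ := hs
  rw [hl]
  have hlen : (l ++ v.edges).length - v.edges.length = l.length := by simp
  rw [hlen, List.take_left, G.isWalk_append]
  have hu := u.wf
  rw [hl, G.isWalk_append] at hu
  refine ⟨hu.1, ?_⟩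
  rw [← hfst, hvw]
  exact w.wf

theorem isWalk_concat {p q : G.DPath} (h : q.first = p.last) :
    G.IsWalk p.first (p.edges ++ q.edges) := by
  rw [G.isWalk_append]
  refine ⟨p.wf, ?_⟩
  show G.IsWalk p.last q.edges
  rw [← h]
  exact q.wf

/-- Concatenation of composable directed paths. -/
def concatPath (p q : G.DPath) (h : q.first = p.last) : G.DPath :=
  ⟨p.first, p.edges ++ q.edges, G.isWalk_concat h⟩

theorem isWalk_replicate (a : G.E) (h : G.tgt a = G.src a) (m : ℕ) :
    G.IsWalk (G.src a) (List.replicate m a) := by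
  induction m with
  | zero => trivial
  | succ n ih => rw [List.replicate_succ, G.isWalk_cons]; exact ⟨rfl, by rw [h]; exact ih⟩

/-- The path traversing a loop `a` exactly `m` times. -/
def loopPow (a : G.E) (h : G.tgt a = G.src a) (m : ℕ) : G.DPath :=
  ⟨G.src a, List.replicate m a, G.isWalk_replicate a h m⟩

/-- `p` is a nonempty directed circuit. -/
def IsCircuit (p : G.DPath) : Prop := p.edges ≠ [] ∧ p.last = p.first

/-- `p` and `d` share no nontrivial common prefix (initial segment). -/
def NoCommonPrefix (p d : G.DPath) : Prop :=
  ∀ l : List G.E, l ≠ [] → l <+: p.edges → ¬ l <+: d.edges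

end DGraph

/-- The underlying set of the graph inverse semigroup `S(Γ)`: pairs of directed
paths with the same initial vertex, together with a zero element. -/
inductive GIS (G : DGraph) where
  | zero : GIS G
  | pair (a b : G.DPath) (h : a.first = b.first) : GIS G

namespace GIS

open scoped Classical in
/-- The multiplication of the graph inverse semigroup:
`(t,u)(v,w) = (t,pw)` if `u = pv`, `(pt,w)` if `v = pu`, and `0` otherwise. -/
noncomputable def mul {G : DGraph} : GIS G → GIS G → GIS G
  | .zero, _ => .zero
  | .pair _ _ _, .zero => .zero
  | .pair t u h1, .pair v w h2 =>
    if hs : v.IsSuffixOf u then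
      .pair t ⟨t.first, u.edges.take (u.edges.length - v.edges.length) ++ w.edges,
        by rw [h1]; exact G.isWalk_chopAppend hs h2⟩ rfl
    else if hs' : u.IsSuffixOf v then
      .pair ⟨v.first, v.edges.take (v.edges.length - u.edges.length) ++ t.edges,
        G.isWalk_chopAppend hs' h1.symm⟩ w h2
    else .zero

noncomputable instance {G : DGraph} : Mul (GIS G) := ⟨GIS.mul⟩

/-- The inverse: `(v,w)⁻¹ = (w,v)` and `0⁻¹ = 0`. -/
def inv {G : DGraph} : GIS G → GIS G
  | .zero => .zero
  | .pair a b h => .pair b a h.symm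

/-- The natural partial order: `x ≤ y` iff `x = e * y` for some idempotent `e`. -/
def le {G : DGraph} (x y : GIS G) : Prop := ∃ e : GIS G, e * e = e ∧ x = e * y

end GIS

/-- `L` is a closed inverse subsemigroup of `S(Γ)`: a nonempty subset closed under
multiplication, inverses, and upward closed in the natural partial order. -/
def IsCISS (G : DGraph) (L : Set (GIS G)) : Prop :=
  L.Nonempty ∧ (∀ a ∈ L, ∀ b ∈ L, a * b ∈ L) ∧ (∀ a ∈ L, a.inv ∈ L) ∧
    (∀ a ∈ L, ∀ s : GIS G, GIS.le a s → s ∈ L)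

/-- The closed inverse subsemigroup `↑{(u,u)}` of (finite) chain type:
all `(q,q)` with `q` a suffix of `u`. -/
def chainSet (G : DGraph) (u : G.DPath) : Set (GIS G) :=
  {x | ∃ q : G.DPath, q.IsSuffixOf u ∧ x = GIS.pair q q rfl}

/-- The edge list of the `r`-th power of the path `p`. -/
def powEdges {G : DGraph} (p : G.DPath) (r : ℕ) : List G.E :=
  (List.replicate r p.edges).flatten

/-- The closed inverse subsemigroup of cycle type
`L_{p,d} = {(v p^r d, v p^s d) : r,s ≥ 0, v a suffix of p} ∪ {(q,q) : q a suffix of d}`. -/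
def cycleSet (G : DGraph) (p d : G.DPath) : Set (GIS G) :=
  {x | (∃ (r s : ℕ) (v a b : G.DPath) (h : a.first = b.first),
          v.IsSuffixOf p ∧ x = GIS.pair a b h ∧
          a.first = v.first ∧ a.edges = v.edges ++ powEdges p r ++ d.edges ∧
          b.first = v.first ∧ b.edges = v.edges ++ powEdges p s ++ d.edges) ∨
       (∃ q : G.DPath, q.IsSuffixOf d ∧ x = GIS.pair q q rfl)}

/-- `L` is a chain of idempotents: all elements are idempotent and any two are
comparable in the natural partial order. -/
def IsChainOfIdem (G : DGraph) (L : Set (GIS G)) : Prop :=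
  (∀ x ∈ L, x * x = x) ∧ ∀ x ∈ L, ∀ y ∈ L, GIS.le x y ∨ GIS.le y x

/-- The set of right cosets `↑(Lt)` (for `t` with `t t⁻¹ ∈ L`) of a closed inverse
subsemigroup `L`. -/
def cosets (G : DGraph) (L : Set (GIS G)) : Set (Set (GIS G)) :=
  {C | ∃ t : GIS G, t * t.inv ∈ L ∧ C = {s | ∃ x ∈ L, GIS.le (x * t) s}}

/-- `H` and `K` are conjugate: for some `s`, `s⁻¹Hs ⊆ K` and `sKs⁻¹ ⊆ H`. -/
def Conjugate (G : DGraph) (H K : Set (GIS G)) : Prop :=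
  ∃ s : GIS G, (∀ h ∈ H, s.inv * h * s ∈ K) ∧ (∀ k ∈ K, s * k * s.inv ∈ H)

/-- The set of directed paths with initial vertex `v` whose first edge (if any)
is not an edge of `w`. -/
def Npaths (G : DGraph) (v : G.V) (w : G.DPath) : Set G.DPath :=
  {t | t.first = v ∧ ∀ e, t.edges.head? = some e → e ∉ w.edges}

/-! ### Auxiliary infrastructure -/

namespace DGraph

variable {G : DGraph}

theorem DPath.ext' {p q : G.DPath} (h1 : p.first = q.first) (h2 : p.edges = q.edges) :
    p = q := by
  cases p; cases q; simp_all

theorem walkEnd_append' (v : G.V) (l1 l2 : List G.E) :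
    G.walkEnd v (l1 ++ l2) = G.walkEnd (G.walkEnd v l1) l2 := by
  induction l1 generalizing v with
  | nil => rfl
  | cons e l ih => simp [ih]

theorem isWalk_take {v : G.V} {l : List G.E} (h : G.IsWalk v l) (n : ℕ) :
    G.IsWalk v (l.take n) := by
  have := (G.isWalk_append v (l.take n) (l.drop n))
  rw [List.take_append_drop] at this
  exact ((this.mp h).1)

theorem isWalk_drop {v : G.V} {l : List G.E} (h : G.IsWalk v l) (n : ℕ) :
    G.IsWalk (G.walkEnd v (l.take n)) (l.drop n) := by
  have := (G.isWalk_append v (l.take n) (l.drop n))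
  rw [List.take_append_drop] at this
  exact ((this.mp h).2)

theorem src_get {v : G.V} {l : List G.E} (h : G.IsWalk v l) (n : ℕ) (hn : n < l.length) :
    G.src (l.get ⟨n, hn⟩) = G.walkEnd v (l.take n) := by
  induction l generalizing v n with
  | nil => simp at hn
  | cons e t ih =>
    rcases n with _ | n
    · simpa using h.1
    · simpa using ih h.2 n (by simpa using hn)

theorem walkEnd_take_getLast {v : G.V} {l : List G.E} (n : ℕ) (hn : n < l.length) :
    G.walkEnd v (l.take (n+1)) = G.tgt (l.get ⟨n, hn⟩) := by
  induction l generalizing v n with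
  | nil => simp at hn
  | cons e t ih =>
    rcases n with _ | n
    · simp [walkEnd]
    · simpa using ih n (by simpa using hn)

/-- The `n`-th vertex of a walk. -/
theorem cons_map_get (v : G.V) (l : List G.E) (n : ℕ) (hn : n < l.length + 1) :
    (v :: l.map G.tgt).get ⟨n, by simpa using hn⟩ = G.walkEnd v (l.take n) := by
  induction l generalizing v n with
  | nil =>
    simp only [List.length] at hn
    have : n = 0 := by omega
    subst this; simp
  | cons e t ih =>
    rcases n with _ | n
    · simp
    · simpa using ih (G.tgt e) n (by simpa using hn)

theorem vertexList_get (p : G.DPath) (n : ℕ) (hn : n < p.edges.length + 1) :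
    p.vertexList.get ⟨n, by simp [DPath.vertexList]; omega⟩
      = G.walkEnd p.first (p.edges.take n) :=
  cons_map_get p.first p.edges n hn

end DGraph

namespace GIS

variable {G : DGraph}

theorem pair_congr {u u' w w' : G.DPath} {h : u.first = w.first} {h' : u'.first = w'.first}
    (hu : u = u') (hw : w = w') : GIS.pair u w h = GIS.pair u' w' h' := by
  subst hu; subst hw; rfl

theorem pair_inj {u u' w w' : G.DPath} {h : u.first = w.first} {h' : u'.first = w'.first}
    (he : GIS.pair u w h = GIS.pair u' w' h') : u = u' ∧ w = w' := by
  injection he with h1 h2; exact ⟨h1, h2⟩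


theorem edges_congr {p q : G.DPath} (h : p = q) : p.edges = q.edges := congrArg DGraph.DPath.edges h

theorem first_congr {p q : G.DPath} (h : p = q) : p.first = q.first := congrArg DGraph.DPath.first h

theorem mul_pair_b1 {t u v w : G.DPath} {h1 : t.first = u.first} {h2 : v.first = w.first}
    (hs : v.IsSuffixOf u) :
    GIS.pair t u h1 * GIS.pair v w h2 =
      GIS.pair t ⟨t.first, u.edges.take (u.edges.length - v.edges.length) ++ w.edges,
        by rw [h1]; exact G.isWalk_chopAppend hs h2⟩ rfl := by
  show GIS.mul _ _ = _
  simp only [GIS.mul]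
  rw [dif_pos hs]

theorem mul_pair_b2 {t u v w : G.DPath} {h1 : t.first = u.first} {h2 : v.first = w.first}
    (hns : ¬ v.IsSuffixOf u) (hs : u.IsSuffixOf v) :
    GIS.pair t u h1 * GIS.pair v w h2 =
      GIS.pair ⟨v.first, v.edges.take (v.edges.length - u.edges.length) ++ t.edges,
        G.isWalk_chopAppend hs h1.symm⟩ w h2 := by
  show GIS.mul _ _ = _
  simp only [GIS.mul]
  rw [dif_neg hns, dif_pos hs]

theorem mul_pair_b0 {t u v w : G.DPath} {h1 : t.first = u.first} {h2 : v.first = w.first}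
    (hns : ¬ v.IsSuffixOf u) (hns' : ¬ u.IsSuffixOf v) :
    GIS.pair t u h1 * GIS.pair v w h2 = GIS.zero := by
  show GIS.mul _ _ = _
  simp only [GIS.mul]
  rw [dif_neg hns, dif_neg hns']

theorem zero_mul' (x : GIS G) : (GIS.zero : GIS G) * x = GIS.zero := rfl

theorem mul_zero' (x : GIS G) : x * (GIS.zero : GIS G) = GIS.zero := by
  cases x <;> rfl

theorem suffix_refl (p : G.DPath) : p.IsSuffixOf p := ⟨[], by simp⟩

theorem suffix_length_le {q p : G.DPath} (h : q.IsSuffixOf p) :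
    q.edges.length ≤ p.edges.length := by
  obtain ⟨l, hl, -⟩ := h
  simp [hl]

/-- multiplying `(u,u)` on the left of `(u,w)` gives `(u,w)`. -/
theorem mul_pair_self {u w : G.DPath} {h' : u.first = u.first} {h : u.first = w.first} :
    GIS.pair u u h' * GIS.pair u w h = GIS.pair u w h := by
  rw [mul_pair_b1 (suffix_refl u)]
  refine pair_congr rfl (DGraph.DPath.ext' ?_ ?_)
  · exact h
  · simp

theorem mul_self_inv {u w : G.DPath} {h : u.first = w.first} :
    GIS.pair u w h * (GIS.pair u w h).inv = GIS.pair u u rfl := by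
  show GIS.pair u w h * GIS.pair w u h.symm = _
  rw [mul_pair_b1 (suffix_refl w)]
  refine pair_congr rfl (DGraph.DPath.ext' rfl ?_)
  simp

theorem idem_shape {e : GIS G} (he : e * e = e) :
    e = GIS.zero ∨ ∃ (y : G.DPath), e = GIS.pair y y rfl := by
  cases e with
  | zero => exact Or.inl rfl
  | pair y y' h =>
    right
    by_cases hs : y.IsSuffixOf y'
    · rw [mul_pair_b1 hs] at he
      obtain ⟨h1, h2⟩ := pair_inj he
      have h2' := edges_congr h2
      simp only at h2'
      have hle := suffix_length_le hs
      have hlen : y'.edges.length ≤ y.edges.length := by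
        have hc := congrArg List.length h2'
        simp only [List.length_append, List.length_take] at hc
        omega
      obtain ⟨l, hl, hf⟩ := hs
      have hl0 : l = [] := by
        have hc := congrArg List.length hl
        simp only [List.length_append] at hc
        exact List.eq_nil_of_length_eq_zero (by omega)
      subst hl0
      have hy : y = y' := DGraph.DPath.ext' (by simpa using hf) (by simpa using hl.symm)
      exact ⟨y, by subst hy; rfl⟩
    · by_cases hs' : y'.IsSuffixOf y
      · rw [mul_pair_b2 hs hs'] at he
        obtain ⟨h1, h2⟩ := pair_inj he
        have h1' := edges_congr h1
        simp only at h1'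
        have hle := suffix_length_le hs'
        have hlen : y.edges.length ≤ y'.edges.length := by
          have hc := congrArg List.length h1'
          simp only [List.length_append, List.length_take] at hc
          omega
        obtain ⟨l, hl, hf⟩ := hs'
        have hl0 : l = [] := by
          have hc := congrArg List.length hl
          simp only [List.length_append] at hc
          exact List.eq_nil_of_length_eq_zero (by omega)
        subst hl0
        have hy : y' = y := DGraph.DPath.ext' (by simpa using hf) (by simpa using hl.symm)
        exact ⟨y', by subst hy; rfl⟩
      · rw [mul_pair_b0 hs hs'] at he
        exact absurd he.symm (by simp)

theorem le_zero {x : GIS G} (h : GIS.le x GIS.zero) : x = GIS.zero := by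
  obtain ⟨e, -, hx⟩ := h
  rw [mul_zero'] at hx
  exact hx

theorem zero_le (s : GIS G) : GIS.le GIS.zero s := ⟨GIS.zero, rfl, rfl⟩

theorem take_sub_append {z l : List G.E} :
    (z ++ l).take ((z ++ l).length - l.length) = z := by
  have hh : (z ++ l).length - l.length = z.length := by simp
  rw [hh, List.take_left]

theorem le_intro {c w c' w' : G.DPath} {h : c.first = w.first} {h' : c'.first = w'.first}
    (z : List G.E) (hc : c.edges = z ++ c'.edges) (hw : w.edges = z ++ w'.edges)
    (hf : c'.first = G.walkEnd c.first z) :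
    GIS.le (GIS.pair c w h) (GIS.pair c' w' h') := by
  refine ⟨GIS.pair c c rfl, mul_pair_self, ?_⟩
  have hs : c'.IsSuffixOf c := ⟨z, hc, hf⟩
  rw [mul_pair_b1 hs]
  refine (pair_congr rfl (DGraph.DPath.ext' ?_ ?_)).symm
  · exact h
  · simp only
    rw [hc, take_sub_append, hw]

theorem le_refl' (x : GIS G) : GIS.le x x := by
  cases x with
  | zero => exact zero_le _
  | pair u w h => exact le_intro [] (by simp) (by simp) (by simp)

theorem le_pair_dest {c w c' w' : G.DPath} {h : c.first = w.first} {h' : c'.first = w'.first}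
    (hle : GIS.le (GIS.pair c w h) (GIS.pair c' w' h')) :
    ∃ z, c.edges = z ++ c'.edges ∧ w.edges = z ++ w'.edges ∧
      c'.first = G.walkEnd c.first z := by
  obtain ⟨e, he, hx⟩ := hle
  rcases idem_shape he with rfl | ⟨y, rfl⟩
  · rw [zero_mul'] at hx; exact absurd hx (by simp)
  by_cases hs : c'.IsSuffixOf y
  · rw [mul_pair_b1 hs] at hx
    obtain ⟨h1, h2⟩ := pair_inj hx
    have h2' := edges_congr h2
    simp only at h2'
    obtain ⟨l, hl, hf⟩ := hs
    refine ⟨l, by rw [h1]; exact hl, ?_, by rw [h1]; exact hf⟩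
    rw [h2', hl, take_sub_append]
  · by_cases hs' : y.IsSuffixOf c'
    · rw [mul_pair_b2 hs hs'] at hx
      obtain ⟨h1, h2⟩ := pair_inj hx
      have h1' := edges_congr h1
      simp only at h1'
      obtain ⟨l, hl, hf⟩ := hs'
      refine ⟨[], ?_, by simpa using edges_congr h2, by simpa using (first_congr h1).symm⟩
      rw [h1', hl, take_sub_append]
      simp [hl]
    · rw [mul_pair_b0 hs hs'] at hx
      exact absurd hx (by simp)

theorem le_trans' {x y z : GIS G} (h1 : GIS.le x y) (h2 : GIS.le y z) : GIS.le x z := by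
  cases z with
  | zero =>
    rw [le_zero h2] at h1
    rw [le_zero h1]
    exact zero_le _
  | pair c'' w'' h'' =>
    cases y with
    | zero =>
      rw [le_zero h1]
      exact zero_le _
    | pair c' w' h' =>
      cases x with
      | zero => exact zero_le _
      | pair c w h =>
        obtain ⟨z1, e1, e2, e3⟩ := le_pair_dest h1
        obtain ⟨z2, f1, f2, f3⟩ := le_pair_dest h2
        refine le_intro (z1 ++ z2) ?_ ?_ ?_
        · rw [e1, f1, List.append_assoc]
        · rw [e2, f2, List.append_assoc]
        · rw [DGraph.walkEnd_append', ← e3, f3]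

end GIS


/-! ### The setting of Statement 19 -/

namespace S19

open DGraph GIS

variable {G : DGraph} (a : G.E) (ha : G.tgt a = G.src a) (m : ℕ) (d : G.DPath)
  (hd : d.first = G.src a)

theorem walkEnd_replicate (ha' : G.tgt a = G.src a) (i : ℕ) :
    G.walkEnd (G.src a) (List.replicate i a) = G.src a := by
  induction i with
  | zero => rfl
  | succ n ih => rw [List.replicate_succ]; simpa [ha'] using ih

/-- The path `a^i d`. -/
def Pp (i : ℕ) : G.DPath :=
  ⟨G.src a, List.replicate i a ++ d.edges, by
    rw [G.isWalk_append]
    refine ⟨G.isWalk_replicate a ha i, ?_⟩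
    rw [walkEnd_replicate a ha, ← hd]
    exact d.wf⟩

/-- The suffix of `d` obtained by dropping the first `n` edges. -/
def Ds (n : ℕ) : G.DPath :=
  ⟨G.walkEnd d.first (d.edges.take n), d.edges.drop n, DGraph.isWalk_drop d.wf n⟩

/-- The path `a^k w`. -/
def Wc (k : ℕ) (w : G.DPath) (hw : w.first = G.src a) : G.DPath :=
  ⟨G.src a, List.replicate k a ++ w.edges, by
    rw [G.isWalk_append]
    refine ⟨G.isWalk_replicate a ha k, ?_⟩
    rw [walkEnd_replicate a ha, ← hw]
    exact w.wf⟩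

/-- The path `a^k (d.take n) w`. -/
def WD (k n : ℕ) (w : G.DPath) (hw : G.walkEnd d.first (d.edges.take n) = w.first) :
    G.DPath :=
  ⟨G.src a, List.replicate k a ++ (d.edges.take n ++ w.edges), by
    rw [G.isWalk_append]
    refine ⟨G.isWalk_replicate a ha k, ?_⟩
    rw [walkEnd_replicate a ha, ← hd, G.isWalk_append]
    refine ⟨DGraph.isWalk_take d.wf n, ?_⟩
    rw [hw]
    exact w.wf⟩

@[simp] theorem Pp_first (i : ℕ) : (Pp a ha d hd i).first = G.src a := rfl
@[simp] theorem Pp_edges (i : ℕ) :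
    (Pp a ha d hd i).edges = List.replicate i a ++ d.edges := rfl
@[simp] theorem Ds_first (n : ℕ) :
    (Ds d n).first = G.walkEnd d.first (d.edges.take n) := rfl
@[simp] theorem Ds_edges (n : ℕ) : (Ds d n).edges = d.edges.drop n := rfl
@[simp] theorem Wc_first (k : ℕ) (w : G.DPath) (hw : w.first = G.src a) :
    (Wc a ha k w hw).first = G.src a := rfl
@[simp] theorem Wc_edges (k : ℕ) (w : G.DPath) (hw : w.first = G.src a) :
    (Wc a ha k w hw).edges = List.replicate k a ++ w.edges := rfl
@[simp] theorem WD_first (k n : ℕ) (w : G.DPath) (hw) :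
    (WD a ha d hd k n w hw).first = G.src a := rfl
@[simp] theorem WD_edges (k n : ℕ) (w : G.DPath) (hw) :
    (WD a ha d hd k n w hw).edges
      = List.replicate k a ++ (d.edges.take n ++ w.edges) := rfl

theorem flatten_repl (r k : ℕ) (c : G.E) :
    (List.replicate r (List.replicate k c)).flatten = List.replicate (r * k) c := by
  induction r with
  | zero => simp
  | succ n ih =>
    rw [List.replicate_succ, List.flatten_cons, ih, Nat.succ_mul, Nat.add_comm,
      List.replicate_add]

theorem powEdges_loop (r : ℕ) :
    powEdges (G.loopPow a ha m) r = List.replicate (r * m) a := by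
  unfold powEdges DGraph.loopPow
  exact flatten_repl r m a

theorem suffix_Ds_Pp (n i : ℕ) : (Ds d n).IsSuffixOf (Pp a ha d hd i) := by
  refine ⟨List.replicate i a ++ d.edges.take n, ?_, ?_⟩
  · simp [List.append_assoc]
  · simp [DGraph.walkEnd_append', walkEnd_replicate a ha, hd]

theorem suffix_Pp_Pp {i i' : ℕ} (h : i ≤ i') :
    (Pp a ha d hd i).IsSuffixOf (Pp a ha d hd i') := by
  refine ⟨List.replicate (i' - i) a, ?_, ?_⟩
  · simp only [Pp_edges, ← List.append_assoc, ← List.replicate_add]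
    rw [Nat.sub_add_cancel h]
  · simp [walkEnd_replicate a ha]

theorem suffix_Ds_Ds {n' n : ℕ} (h : n' ≤ n) :
    (Ds d n).IsSuffixOf (Ds d n') := by
  refine ⟨(d.edges.drop n').take (n - n'), ?_, ?_⟩
  · simp only [Ds_edges]
    conv_lhs => rw [← List.take_append_drop (n - n') (d.edges.drop n')]
    rw [List.drop_drop, Nat.add_sub_cancel' h]
  · simp only [Ds_first]
    rw [← DGraph.walkEnd_append', ← List.take_add, Nat.add_sub_cancel' h]

theorem not_suffix_of_lt {p q : G.DPath} (h : p.edges.length < q.edges.length) :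
    ¬ q.IsSuffixOf p := fun hs => absurd (suffix_length_le hs) (by omega)

/-- Characterization of the members of `L`. -/
theorem memL_iff (hm : 1 ≤ m) (x : GIS G) :
    x ∈ cycleSet G (G.loopPow a ha m) d ↔
      ((∃ i₁ i₂, i₁ % m = i₂ % m ∧
          x = GIS.pair (Pp a ha d hd i₁) (Pp a ha d hd i₂) rfl) ∨
        (∃ n, n ≤ d.edges.length ∧ x = GIS.pair (Ds d n) (Ds d n) rfl)) := by
  constructor
  · rintro (⟨r, s, v, α, β, h, ⟨l, hl, hf⟩, rfl, hα1, hα2, hβ1, hβ2⟩ | ⟨q, ⟨l, hl, hf⟩, rfl⟩)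
    · left
      have hp1 : (G.loopPow a ha m).edges = List.replicate m a := rfl
      have hp2 : (G.loopPow a ha m).first = G.src a := rfl
      rw [hp1] at hl
      have hlen : l.length + v.edges.length = m := by
        have := congrArg List.length hl
        simpa using this.symm
      have hv : v.edges = List.replicate (m - l.length) a := by
        have : v.edges = (List.replicate m a).drop l.length := by
          rw [hl, List.drop_left]
        rw [this, List.drop_replicate]
      have hlrep : l = List.replicate l.length a := by
        have hlt : l = (List.replicate m a).take l.length := by
          rw [hl, List.take_left]
        conv_lhs => rw [hlt]
        rw [List.take_replicate, Nat.min_eq_left (by omega)]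
      have hvf : v.first = G.src a := by
        rw [hf, hp2]
        conv_lhs => rw [hlrep]
        exact walkEnd_replicate a ha _
      set j := m - l.length with hj
      refine ⟨j + r * m, j + s * m, ?_, ?_⟩
      · simp [Nat.add_mul_mod_self_right]
      · refine pair_congr (DGraph.DPath.ext' ?_ ?_) (DGraph.DPath.ext' ?_ ?_)
        · rw [hα1, hvf]; rfl
        · rw [hα2, hv, powEdges_loop, Pp_edges, ← List.replicate_add]
        · rw [hβ1, hvf]; rfl
        · rw [hβ2, hv, powEdges_loop, Pp_edges, ← List.replicate_add]
    · right
      refine ⟨l.length, ?_, ?_⟩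
      · have := congrArg List.length hl
        simp at this
        omega
      · have he : q.edges = d.edges.drop l.length := by rw [hl, List.drop_left]
        have hff : q.first = G.walkEnd d.first (d.edges.take l.length) := by
          rw [hf]
          congr 1
          rw [hl, List.take_left]
        exact pair_congr (DGraph.DPath.ext' hff he) (DGraph.DPath.ext' hff he)
  · rintro (⟨i₁, i₂, hmod, rfl⟩ | ⟨n, hn, rfl⟩)
    · left
      have hjlt : i₁ % m < m := Nat.mod_lt _ (by omega)
      refine ⟨i₁ / m, i₂ / m, ⟨G.src a, List.replicate (i₁ % m) a,
        G.isWalk_replicate a ha _⟩, Pp a ha d hd i₁, Pp a ha d hd i₂, rfl, ?_, rfl, rfl, ?_,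
        rfl, ?_⟩
      · refine ⟨List.replicate (m - i₁ % m) a, ?_, ?_⟩
        · show List.replicate m a = _
          rw [← List.replicate_add, Nat.sub_add_cancel (le_of_lt hjlt)]
        · exact (walkEnd_replicate a ha _).symm
      · rw [powEdges_loop, Pp_edges]
        simp only [← List.append_assoc, ← List.replicate_add]
        rw [Nat.mod_add_div' i₁ m]
      · rw [powEdges_loop, Pp_edges]
        simp only [← List.append_assoc, ← List.replicate_add]
        rw [hmod, Nat.mod_add_div' i₂ m]
    · right
      refine ⟨Ds d n, ⟨d.edges.take n, by simp, rfl⟩, rfl⟩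


/-! ### Product computations -/

theorem M1 {i i₂ : ℕ} (hii : i ≤ i₂) (i₁ : ℕ) {w : G.DPath}
    (h : (Pp a ha d hd i).first = w.first) :
    GIS.pair (Pp a ha d hd i₁) (Pp a ha d hd i₂) rfl * GIS.pair (Pp a ha d hd i) w h
      = GIS.pair (Pp a ha d hd i₁) (Wc a ha (i₂ - i) w h.symm) rfl := by
  refine (mul_pair_b1 (suffix_Pp_Pp a ha d hd hii)).trans ?_
  refine pair_congr rfl (DGraph.DPath.ext' rfl ?_)
  simp only [Pp_edges, Wc_edges, List.length_append, List.length_replicate]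
  have h1 : i₂ + d.edges.length - (i + d.edges.length) = i₂ - i := by omega
  rw [h1, List.take_append, List.take_replicate,
    Nat.min_eq_left (by omega), List.length_replicate]
  have h2 : i₂ - i - i₂ = 0 := by omega
  rw [h2]
  simp
  rfl

theorem M2 {i i₂ : ℕ} (hii : i₂ < i) (i₁ : ℕ) {w : G.DPath}
    (h : (Pp a ha d hd i).first = w.first) :
    GIS.pair (Pp a ha d hd i₁) (Pp a ha d hd i₂) rfl * GIS.pair (Pp a ha d hd i) w h
      = GIS.pair (Pp a ha d hd (i - i₂ + i₁)) w h := by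
  refine (mul_pair_b2 (not_suffix_of_lt (by simp; omega)) (suffix_Pp_Pp a ha d hd (le_of_lt hii))).trans ?_
  refine pair_congr (DGraph.DPath.ext' rfl ?_) rfl
  simp only [Pp_edges, List.length_append, List.length_replicate]
  have h1 : i + d.edges.length - (i₂ + d.edges.length) = i - i₂ := by omega
  rw [h1, List.take_append, List.take_replicate,
    Nat.min_eq_left (by omega), List.length_replicate]
  have h2 : i - i₂ - i = 0 := by omega
  rw [h2]
  simp [← List.append_assoc, ← List.replicate_add]

theorem M3 {n' : ℕ} (hn' : n' ≤ d.edges.length) (i : ℕ) {w : G.DPath}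
    (h : (Pp a ha d hd i).first = w.first) :
    GIS.pair (Ds d n') (Ds d n') rfl * GIS.pair (Pp a ha d hd i) w h
      = GIS.pair (Pp a ha d hd i) w h := by
  by_cases hs : (Pp a ha d hd i).IsSuffixOf (Ds d n')
  · have hlen := suffix_length_le hs
    simp only [Pp_edges, Ds_edges, List.length_append, List.length_replicate,
      List.length_drop] at hlen
    have hi0 : i = 0 := by omega
    have hn0 : n' = 0 := by omega
    subst hi0; subst hn0
    rw [mul_pair_b1 hs]
    refine pair_congr (DGraph.DPath.ext' ?_ ?_) (DGraph.DPath.ext' ?_ ?_)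
    · simp [hd]
    · simp
    · simpa [hd] using h
    · simp
  · rw [mul_pair_b2 hs (suffix_Ds_Pp a ha d hd n' i)]
    refine pair_congr (DGraph.DPath.ext' rfl ?_) rfl
    simp only [Pp_edges, Ds_edges, List.length_append, List.length_replicate,
      List.length_drop]
    have h1 : i + d.edges.length - (d.edges.length - n') = i + n' := by omega
    rw [h1, List.take_append, List.take_replicate,
      Nat.min_eq_right (Nat.le_add_right _ _), List.length_replicate]
    have h2 : i + n' - i = n' := by omega
    rw [h2, List.append_assoc, List.take_append_drop]

theorem M4 {n : ℕ} (hn : n ≤ d.edges.length) (i₁ i₂ : ℕ) {w : G.DPath}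
    (h : (Ds d n).first = w.first) :
    GIS.pair (Pp a ha d hd i₁) (Pp a ha d hd i₂) rfl * GIS.pair (Ds d n) w h
      = GIS.pair (Pp a ha d hd i₁) (WD a ha d hd i₂ n w h) rfl := by
  refine (mul_pair_b1 (suffix_Ds_Pp a ha d hd n i₂)).trans ?_
  refine pair_congr rfl (DGraph.DPath.ext' rfl ?_)
  simp only [Pp_edges, Ds_edges, WD_edges, List.length_append, List.length_replicate,
    List.length_drop]
  have h1 : i₂ + d.edges.length - (d.edges.length - n) = i₂ + n := by omega
  rw [h1, List.take_append, List.take_replicate,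
    Nat.min_eq_right (Nat.le_add_right _ _), List.length_replicate]
  have h2 : i₂ + n - i₂ = n := by omega
  rw [h2, List.append_assoc]
  rfl

theorem M5 {n' n : ℕ} (hn'n : n' ≤ n) (hn : n ≤ d.edges.length) {w : G.DPath}
    (h : (Ds d n).first = w.first) :
    GIS.pair (Ds d n') (Ds d n') rfl * GIS.pair (Ds d n) w h
      = GIS.pair (Ds d n')
          ⟨(Ds d n').first, (d.edges.drop n').take (n - n') ++ w.edges, by
            rw [G.isWalk_append]
            refine ⟨DGraph.isWalk_take (Ds d n').wf _, ?_⟩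
            have : G.walkEnd (Ds d n').first ((d.edges.drop n').take (n - n'))
                = (Ds d n).first := by
              simp only [Ds_first]
              rw [← DGraph.walkEnd_append', ← List.take_add, Nat.add_sub_cancel' hn'n]
            rw [this, h]
            exact w.wf⟩ rfl := by
  rw [mul_pair_b1 (suffix_Ds_Ds d hn'n)]
  refine pair_congr rfl (DGraph.DPath.ext' rfl ?_)
  simp only [Ds_edges, List.length_drop]
  have h1 : d.edges.length - n' - (d.edges.length - n) = n - n' := by omega
  rw [h1]

theorem M6 {n' n : ℕ} (hnn' : n < n') (hn' : n' ≤ d.edges.length) {w : G.DPath}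
    (h : (Ds d n).first = w.first) :
    GIS.pair (Ds d n') (Ds d n') rfl * GIS.pair (Ds d n) w h
      = GIS.pair (Ds d n) w h := by
  rw [mul_pair_b2 (not_suffix_of_lt (by simp; omega)) (suffix_Ds_Ds d (le_of_lt hnn'))]
  refine pair_congr (DGraph.DPath.ext' rfl ?_) rfl
  simp only [Ds_edges, List.length_drop]
  have h1 : d.edges.length - n - (d.edges.length - n') = n' - n := by omega
  rw [h1]
  conv_rhs => rw [← List.take_append_drop (n' - n) (d.edges.drop n)]
  rw [List.drop_drop, Nat.add_sub_cancel' (le_of_lt hnn')]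


/-! ### Cosets -/

/-- The coset determined by `t`. -/
def CosL (t : GIS G) : Set (GIS G) :=
  {s | ∃ x ∈ cycleSet G (G.loopPow a ha m) d, GIS.le (x * t) s}

theorem cos_sub {t t' : GIS G}
    (H : ∀ x ∈ cycleSet G (G.loopPow a ha m) d,
      ∃ y ∈ cycleSet G (G.loopPow a ha m) d, GIS.le (y * t') (x * t)) :
    CosL a ha m d t ⊆ CosL a ha m d t' := by
  rintro s ⟨x, hx, hle⟩
  obtain ⟨y, hy, h2⟩ := H x hx
  exact ⟨y, hy, le_trans' h2 hle⟩

theorem Wc_Wc {k k' : ℕ} {w : G.DPath} (hw : w.first = G.src a) (hw') :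
    Wc a ha k (Wc a ha k' w hw) hw' = Wc a ha (k + k') w hw :=
  DGraph.DPath.ext' rfl (by simp [← List.append_assoc, ← List.replicate_add])

/-- Normal form of a generator of the coset of `(a^i d, w)`. -/
theorem gen (hm : 1 ≤ m) {x : GIS G} (hx : x ∈ cycleSet G (G.loopPow a ha m) d)
    (i : ℕ) {w : G.DPath} (h : (Pp a ha d hd i).first = w.first) :
    ∃ I C, I % m = (C + i) % m ∧
      x * GIS.pair (Pp a ha d hd i) w h
        = GIS.pair (Pp a ha d hd I) (Wc a ha C w h.symm) rfl := by
  rcases (memL_iff a ha m d hd hm x).mp hx with ⟨i₁, i₂, hmod, rfl⟩ | ⟨n, hn, rfl⟩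
  · by_cases hii : i ≤ i₂
    · refine ⟨i₁, i₂ - i, ?_, ?_⟩
      · rwa [Nat.sub_add_cancel hii]
      · exact M1 a ha d hd hii i₁ h
    · refine ⟨i - i₂ + i₁, 0, ?_, ?_⟩
      · have h1 : (i - i₂ + i₁) % m = (i - i₂ + i₂) % m := Nat.ModEq.add_left _ hmod
        rw [h1, Nat.sub_add_cancel (by omega), Nat.zero_add]
      · rw [M2 a ha d hd (by omega) i₁ h]
        refine pair_congr rfl (DGraph.DPath.ext' ?_ ?_)
        · exact h.symm
        · simp [Wc]
  · refine ⟨i, 0, by rw [Nat.zero_add], ?_⟩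
    rw [M3 a ha d hd hn i h]
    refine pair_congr rfl (DGraph.DPath.ext' ?_ ?_)
    · exact h.symm
    · simp [Wc]

theorem genex (hm : 1 ≤ m) (i : ℕ) {w : G.DPath} (h : (Pp a ha d hd i).first = w.first)
    {I C : ℕ} (hIC : I % m = (C + i) % m) :
    GIS.pair (Pp a ha d hd I) (Pp a ha d hd (C + i)) rfl
        ∈ cycleSet G (G.loopPow a ha m) d ∧
      GIS.pair (Pp a ha d hd I) (Pp a ha d hd (C + i)) rfl
          * GIS.pair (Pp a ha d hd i) w h
        = GIS.pair (Pp a ha d hd I) (Wc a ha C w h.symm) rfl := by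
  constructor
  · exact (memL_iff a ha m d hd hm _).mpr (Or.inl ⟨I, C + i, hIC, rfl⟩)
  · rw [M1 a ha d hd (Nat.le_add_left i C) I h]
    have : C + i - i = C := by omega
    rw [this]

theorem red2sub (hm : 1 ≤ m) {i k i' k' : ℕ} {w₀ : G.DPath} (hw : w₀.first = G.src a)
    (hcong : (i + k') % m = (i' + k) % m) :
    CosL a ha m d (GIS.pair (Pp a ha d hd i) (Wc a ha k w₀ hw) rfl)
      ⊆ CosL a ha m d (GIS.pair (Pp a ha d hd i') (Wc a ha k' w₀ hw) rfl) := by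
  refine cos_sub a ha m d ?_
  intro x hx
  obtain ⟨I, C, hIC, hxt⟩ := gen a ha m d hd hm hx i (w := Wc a ha k w₀ hw) rfl
  have hIC' : (I + k') % m = ((C + k) + i') % m := by
    have h1 : (I + k') % m = ((C + i) + k') % m := Nat.ModEq.add_right k' hIC
    have h2 : ((C + i) + k') % m = (C + (i' + k)) % m := by
      rw [Nat.add_assoc]
      exact Nat.ModEq.add_left C hcong
    rw [h1, h2]
    congr 1
    omega
  obtain ⟨hyL, hy⟩ := genex a ha m d hd hm i' (w := Wc a ha k' w₀ hw) (h := rfl) hIC'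
  refine ⟨_, hyL, ?_⟩
  have hxt' : x * GIS.pair (Pp a ha d hd i) (Wc a ha k w₀ hw) rfl
      = GIS.pair (Pp a ha d hd I) (Wc a ha (C + k) w₀ hw) rfl := by
    rw [hxt]; exact pair_congr rfl (Wc_Wc a ha hw _)
  have hy' : GIS.pair (Pp a ha d hd (I + k')) (Pp a ha d hd (C + k + i')) rfl
        * GIS.pair (Pp a ha d hd i') (Wc a ha k' w₀ hw) rfl
      = GIS.pair (Pp a ha d hd (I + k')) (Wc a ha (C + k + k') w₀ hw) rfl := by
    rw [hy]; exact pair_congr rfl (Wc_Wc a ha hw _)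
  rw [hxt', hy']
  refine le_intro (List.replicate k' a) ?_ ?_ ?_
  · simp only [Pp_edges, ← List.append_assoc, ← List.replicate_add]
    congr 2
    omega
  · simp only [Wc_edges, ← List.append_assoc, ← List.replicate_add]
    congr 2
    omega
  · exact (walkEnd_replicate a ha k').symm

theorem red2 (hm : 1 ≤ m) {i k i' k' : ℕ} {w₀ : G.DPath} (hw : w₀.first = G.src a)
    (hcong : (i + k') % m = (i' + k) % m) :
    CosL a ha m d (GIS.pair (Pp a ha d hd i) (Wc a ha k w₀ hw) rfl)
      = CosL a ha m d (GIS.pair (Pp a ha d hd i') (Wc a ha k' w₀ hw) rfl) :=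
  Set.Subset.antisymm (red2sub a ha m d hd hm hw hcong)
    (red2sub a ha m d hd hm hw hcong.symm)

theorem red1 (hm : 1 ≤ m) {n : ℕ} (hn : n ≤ d.edges.length) {w : G.DPath}
    (h : (Ds d n).first = w.first) :
    CosL a ha m d (GIS.pair (Ds d n) w h)
      = CosL a ha m d (GIS.pair (Pp a ha d hd 0) (WD a ha d hd 0 n w h) rfl) := by
  apply Set.Subset.antisymm
  · refine cos_sub a ha m d ?_
    intro x hx
    rcases (memL_iff a ha m d hd hm x).mp hx with ⟨i₁, i₂, hmod, rfl⟩ | ⟨n', hn', rfl⟩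
    · refine ⟨_, (memL_iff a ha m d hd hm _).mpr (Or.inl ⟨i₁, i₂, hmod, rfl⟩), ?_⟩
      rw [M4 a ha d hd hn i₁ i₂ h, M1 a ha d hd (Nat.zero_le i₂) i₁ (w := WD a ha d hd 0 n w h) rfl]
      have he : GIS.pair (Pp a ha d hd i₁)
            (Wc a ha (i₂ - 0) (WD a ha d hd 0 n w h) rfl.symm) rfl
          = GIS.pair (Pp a ha d hd i₁) (WD a ha d hd i₂ n w h) rfl := by
        refine pair_congr rfl (DGraph.DPath.ext' rfl ?_)
        simp [Wc, WD, ← List.append_assoc, ← List.replicate_add]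
      rw [he]
      exact le_refl' _
    · refine ⟨_, (memL_iff a ha m d hd hm _).mpr (Or.inl ⟨0, 0, rfl, rfl⟩), ?_⟩
      rw [M1 a ha d hd (Nat.le_refl 0) 0 (w := WD a ha d hd 0 n w h) rfl]
      by_cases hc : n' ≤ n
      · rw [M5 d hc hn h]
        refine le_intro (d.edges.take n') ?_ ?_ ?_
        · simp
        · simp only [Wc, WD, Nat.sub_self, List.replicate_zero, List.nil_append,
            ← List.append_assoc]
          rw [← List.take_add, Nat.add_sub_cancel' hc]
        · simp [hd]
      · rw [M6 d (by omega) hn' h]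
        refine le_intro (d.edges.take n) ?_ ?_ ?_
        · simp
        · simp [Wc, WD]
        · simp [hd]
  · refine cos_sub a ha m d ?_
    intro x hx
    rcases (memL_iff a ha m d hd hm x).mp hx with ⟨i₁, i₂, hmod, rfl⟩ | ⟨n', hn', rfl⟩
    · refine ⟨_, (memL_iff a ha m d hd hm _).mpr (Or.inl ⟨i₁, i₂, hmod, rfl⟩), ?_⟩
      rw [M4 a ha d hd hn i₁ i₂ h, M1 a ha d hd (Nat.zero_le i₂) i₁ (w := WD a ha d hd 0 n w h) rfl]
      have he : GIS.pair (Pp a ha d hd i₁)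
            (Wc a ha (i₂ - 0) (WD a ha d hd 0 n w h) rfl.symm) rfl
          = GIS.pair (Pp a ha d hd i₁) (WD a ha d hd i₂ n w h) rfl := by
        refine pair_congr rfl (DGraph.DPath.ext' rfl ?_)
        simp [Wc, WD, ← List.append_assoc, ← List.replicate_add]
      rw [he]
      exact le_refl' _
    · refine ⟨_, (memL_iff a ha m d hd hm _).mpr (Or.inl ⟨0, 0, rfl, rfl⟩), ?_⟩
      rw [M4 a ha d hd hn 0 0 h, M3 a ha d hd hn' 0 (w := WD a ha d hd 0 n w h) rfl]
      exact le_refl' _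

/-- Splitting off the maximal initial power of `a` from a path based at `b`. -/
theorem decomp (w : G.DPath) (hw : w.first = G.src a) :
    ∃ (k : ℕ) (w₀ : G.DPath) (hw₀ : w₀.first = G.src a),
      (∀ e, w₀.edges.head? = some e → e ≠ a) ∧ w = Wc a ha k w₀ hw₀ := by
  classical
  set p : G.E → Bool := fun e => decide (e = a) with hp
  have htw : w.edges.takeWhile p = List.replicate (w.edges.takeWhile p).length a := by
    apply List.eq_replicate_of_mem
    intro b hb
    have := List.mem_takeWhile_imp hb
    rw [hp] at this
    exact of_decide_eq_true this
  have hsplit : w.edges = List.replicate (w.edges.takeWhile p).length a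
      ++ w.edges.dropWhile p := by
    conv_lhs => rw [← List.takeWhile_append_dropWhile (p := p) (l := w.edges)]
    rw [← htw]
  have hwalk : G.IsWalk (G.src a) (w.edges.dropWhile p) := by
    have hwf := w.wf
    rw [hw] at hwf
    conv at hwf => rw [hsplit]
    rw [G.isWalk_append, walkEnd_replicate a ha] at hwf
    exact hwf.2
  refine ⟨(w.edges.takeWhile p).length, ⟨G.src a, w.edges.dropWhile p, hwalk⟩, rfl, ?_, ?_⟩
  · intro e he hea
    have h := List.head?_dropWhile_not p w.edges
    rw [he] at h
    rw [hp] at h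
    simp only [decide_eq_false_iff_not] at h
    exact h hea
  · exact DGraph.DPath.ext' hw hsplit


/-! ### Consequences of the no-extra-circuit hypothesis -/

theorem get0_mem_take {α : Type} (l : List α) {s : ℕ} (hs : 0 < s) (hl : 0 < l.length) :
    l.get ⟨0, hl⟩ ∈ l.take s := by
  have h0lt : 0 < (l.take s).length := by rw [List.length_take]; omega
  have heq : (l.take s).get ⟨0, h0lt⟩ = l.get ⟨0, hl⟩ := by simp
  rw [← heq]
  exact List.get_mem _ _

theorem head?_eq_get {α : Type} {l : List α} (h : 0 < l.length) :
    l.head? = some (l.get ⟨0, h⟩) := by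
  cases l with
  | nil => simp at h
  | cons e t => rfl

theorem vertexList_length (w : G.DPath) :
    w.vertexList.length = w.edges.length + 1 := by
  simp [DPath.vertexList]

theorem circuit_all_a'
    (honly : ∀ c : G.DPath, G.IsCircuit c →
      (∃ g : G.DPath, g.first ∈ d.vertexList ∧ g.last ∈ c.vertexList) →
      ∀ e ∈ c.edges, e = a)
    {v₀ : G.V} (hv₀ : v₀ ∈ d.vertexList) {l₀ : List G.E} (hw₀ : G.IsWalk v₀ l₀)
    {l : List G.E} (hw : G.IsWalk (G.walkEnd v₀ l₀) l)
    (hend : G.walkEnd (G.walkEnd v₀ l₀) l = G.walkEnd v₀ l₀) (hne : l ≠ []) :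
    ∀ e ∈ l, e = a := by
  refine honly ⟨G.walkEnd v₀ l₀, l, hw⟩ ⟨hne, hend⟩ ⟨⟨v₀, l₀, hw₀⟩, hv₀, ?_⟩
  exact List.mem_cons_self

theorem head_ne_a (hm : 1 ≤ m) (hpre : G.NoCommonPrefix (G.loopPow a ha m) d) :
    ∀ e, d.edges.head? = some e → e ≠ a := by
  intro e he hea
  subst hea
  have hp : [e] <+: (G.loopPow e ha m).edges := by
    refine ⟨List.replicate (m - 1) e, ?_⟩
    have h0 : (G.loopPow e ha m).edges = List.replicate m e := rfl
    rw [h0, List.singleton_append, ← List.replicate_succ]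
    congr 1
    omega
  have hnd := hpre [e] (by simp) hp
  apply hnd
  cases hl : d.edges with
  | nil => rw [hl] at he; simp at he
  | cons e' t =>
    rw [hl] at he
    simp at he
    subst he
    exact ⟨t, by simp⟩

theorem a_not_mem_d (hd' : d.first = G.src a) (hm : 1 ≤ m) (hpre : G.NoCommonPrefix (G.loopPow a ha m) d)
    (honly : ∀ c : G.DPath, G.IsCircuit c →
      (∃ g : G.DPath, g.first ∈ d.vertexList ∧ g.last ∈ c.vertexList) →
      ∀ e ∈ c.edges, e = a) :
    a ∉ d.edges := by
  intro hmem
  obtain ⟨⟨j, hj⟩, hget⟩ := List.mem_iff_get.mp hmem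
  have hsrc : G.walkEnd d.first (d.edges.take j) = G.src a := by
    have h1 := DGraph.src_get d.wf j hj
    rw [hget] at h1
    exact h1.symm
  rcases Nat.eq_zero_or_pos j with hj0 | hj0
  · subst hj0
    refine head_ne_a a ha m d hm hpre _ (head?_eq_get (by omega)) ?_
    exact hget
  · have hall : ∀ e ∈ d.edges.take j, e = a := by
      refine circuit_all_a' a d honly (List.mem_cons_self) (l₀ := [])
        (G.isWalk_nil d.first) (DGraph.isWalk_take d.wf j) ?_ ?_
      · show G.walkEnd d.first _ = d.first
        rw [hsrc, hd']
      · intro hnil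
        have hlen := congrArg List.length hnil
        rw [List.length_take] at hlen
        simp only [List.length_nil] at hlen
        omega
    cases hl : d.edges.take j with
    | nil =>
      have hlen := congrArg List.length hl
      rw [List.length_take] at hlen
      simp only [List.length_nil] at hlen
      omega
    | cons e t =>
      have he : e = a := hall e (by rw [hl]; exact List.mem_cons_self)
      have hmem2 : e ∈ d.edges := List.take_subset j d.edges (by rw [hl]; exact List.mem_cons_self)
      refine head_ne_a a ha m d hm hpre e ?_ he
      cases hl2 : d.edges with
      | nil => rw [hl2] at hmem2; simp at hmem2
      | cons e' t' =>
        have : e' = e := by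
          have h3 : (d.edges.take j).head? = some e := by rw [hl]; rfl
          have h4 : d.edges.head? = some e' := by rw [hl2]; rfl
          rcases Nat.eq_zero_or_pos j with h | h
          · subst h; simp at hl
          · have h5 : (d.edges.take j).head? = d.edges.head? := by
              rw [hl2]
              have : j = (j-1) + 1 := by omega
              rw [this, List.take_succ_cons]
              rfl
            rw [h3, h4] at h5
            simpa using h5.symm
        rw [this]
        rfl

theorem slice_head_a
    (honly : ∀ c : G.DPath, G.IsCircuit c →
      (∃ g : G.DPath, g.first ∈ d.vertexList ∧ g.last ∈ c.vertexList) →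
      ∀ e ∈ c.edges, e = a)
    (w : G.DPath) (hw1 : w.first ∈ d.vertexList) {i j : ℕ} (hij : i < j)
    (hj : j ≤ w.edges.length)
    (hdup : G.walkEnd w.first (w.edges.take i) = G.walkEnd w.first (w.edges.take j)) :
    ∃ (hi : i < w.edges.length), w.edges.get ⟨i, hi⟩ = a := by
  have hi : i < w.edges.length := lt_of_lt_of_le hij hj
  have hwalk : G.IsWalk (G.walkEnd w.first (w.edges.take i))
      ((w.edges.drop i).take (j - i)) :=
    DGraph.isWalk_take (DGraph.isWalk_drop w.wf i) _
  have htj : w.edges.take i ++ (w.edges.drop i).take (j - i) = w.edges.take j := by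
    rw [← List.take_add, Nat.add_sub_cancel' (le_of_lt hij)]
  have hend : G.walkEnd (G.walkEnd w.first (w.edges.take i)) ((w.edges.drop i).take (j - i))
      = G.walkEnd w.first (w.edges.take i) := by
    rw [← DGraph.walkEnd_append', htj, ← hdup]
  have hne : (w.edges.drop i).take (j - i) ≠ [] := by
    intro hnil
    have hlen := congrArg List.length hnil
    rw [List.length_take, List.length_drop] at hlen
    simp only [List.length_nil] at hlen
    omega
  have hall := circuit_all_a' a d honly hw1 (DGraph.isWalk_take w.wf i) hwalk hend hne
  refine ⟨hi, ?_⟩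
  apply hall
  obtain ⟨k, hk⟩ : ∃ k, j - i = k + 1 := ⟨j - i - 1, by omega⟩
  rw [hk, List.drop_eq_getElem_cons hi, List.take_succ_cons]
  simp only [List.get_eq_getElem]
  exact List.mem_cons_self

theorem exists_dup (w : G.DPath) (hnd : ¬ w.vertexList.Nodup) :
    ∃ i j, i < j ∧ j ≤ w.edges.length ∧
      G.walkEnd w.first (w.edges.take i) = G.walkEnd w.first (w.edges.take j) := by
  rw [List.nodup_iff_injective_get] at hnd
  simp only [Function.Injective, not_forall] at hnd
  obtain ⟨x, y, hxy, hne⟩ := hnd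
  have hvl := vertexList_length w
  have key : ∀ (u v : Fin w.vertexList.length), (u : ℕ) < (v : ℕ) →
      w.vertexList.get u = w.vertexList.get v →
      ∃ i j, i < j ∧ j ≤ w.edges.length ∧
        G.walkEnd w.first (w.edges.take i) = G.walkEnd w.first (w.edges.take j) := by
    intro u v huv hget
    have hu : (u : ℕ) < w.edges.length + 1 := by
      have h2 := u.isLt; omega
    have hv : (v : ℕ) < w.edges.length + 1 := by
      have h2 := v.isLt; omega
    refine ⟨u, v, huv, by omega, ?_⟩
    rw [← DGraph.vertexList_get w u hu, ← DGraph.vertexList_get w v hv]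
    exact hget
  rcases lt_trichotomy (x : ℕ) (y : ℕ) with h | h | h
  · exact key x y h hxy
  · exact absurd (Fin.ext h) hne
  · exact key y x h hxy.symm

theorem nodup2
    (honly : ∀ c : G.DPath, G.IsCircuit c →
      (∃ g : G.DPath, g.first ∈ d.vertexList ∧ g.last ∈ c.vertexList) →
      ∀ e ∈ c.edges, e = a)
    (w : G.DPath) (hw1 : w.first ∈ d.vertexList) (hw2 : a ∉ w.edges) :
    w.vertexList.Nodup := by
  by_contra hnd
  obtain ⟨i, j, hij, hj, hdup⟩ := exists_dup w hnd
  obtain ⟨hi, hget⟩ := slice_head_a a d honly w hw1 hij hj hdup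
  exact hw2 (hget ▸ List.get_mem _ _)

theorem nodup_d (hd' : d.first = G.src a) (hm : 1 ≤ m) (hpre : G.NoCommonPrefix (G.loopPow a ha m) d)
    (honly : ∀ c : G.DPath, G.IsCircuit c →
      (∃ g : G.DPath, g.first ∈ d.vertexList ∧ g.last ∈ c.vertexList) →
      ∀ e ∈ c.edges, e = a) :
    d.vertexList.Nodup :=
  nodup2 a d honly d (List.mem_cons_self) (a_not_mem_d a ha m d hd' hm hpre honly)

theorem nodup1 (hd' : d.first = G.src a)
    (honly : ∀ c : G.DPath, G.IsCircuit c →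
      (∃ g : G.DPath, g.first ∈ d.vertexList ∧ g.last ∈ c.vertexList) →
      ∀ e ∈ c.edges, e = a)
    (w : G.DPath) (hw1 : w.first = G.src a)
    (hhead : ∀ e, w.edges.head? = some e → e ≠ a) :
    w.vertexList.Nodup := by
  classical
  by_contra hnd
  have hmem : w.first ∈ d.vertexList := by
    rw [hw1, ← hd']
    exact List.mem_cons_self
  have hex : ∃ j, ∃ i, i < j ∧ j ≤ w.edges.length ∧
      G.walkEnd w.first (w.edges.take i) = G.walkEnd w.first (w.edges.take j) := by
    obtain ⟨i, j, h1, h2, h3⟩ := exists_dup w hnd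
    exact ⟨j, i, h1, h2, h3⟩
  obtain ⟨i, hij, hj, hdup⟩ := Nat.find_spec hex
  obtain ⟨hi, hget⟩ := slice_head_a a d honly w hmem hij hj hdup
  have hWi : G.walkEnd w.first (w.edges.take i) = w.first := by
    have h1 := DGraph.src_get w.wf i hi
    rw [hget] at h1
    rw [← h1, hw1]
  rcases Nat.eq_zero_or_pos i with hi0 | hi0
  · subst hi0
    exact hhead _ (head?_eq_get (by omega)) hget
  · exact Nat.find_min hex hij ⟨0, hi0, by omega, by simpa using hWi.symm⟩

theorem no_a (hd' : d.first = G.src a) (hm : 1 ≤ m) (hpre : G.NoCommonPrefix (G.loopPow a ha m) d)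
    (honly : ∀ c : G.DPath, G.IsCircuit c →
      (∃ g : G.DPath, g.first ∈ d.vertexList ∧ g.last ∈ c.vertexList) →
      ∀ e ∈ c.edges, e = a)
    {n : ℕ} (hn : n ≤ d.edges.length) {w : G.DPath} (hfw : (Ds d n).first = w.first)
    (hh : n = 0 → ∀ e, w.edges.head? = some e → e ≠ a) :
    a ∉ w.edges := by
  classical
  intro hmem
  have hex : ∃ s, ∃ (hs : s < w.edges.length), w.edges.get ⟨s, hs⟩ = a := by
    obtain ⟨⟨s, hs⟩, hg⟩ := List.mem_iff_get.mp hmem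
    exact ⟨s, hs, hg⟩
  obtain ⟨hs₀, hgs⟩ := Nat.find_spec hex
  set s₀ := Nat.find hex with hs₀def
  by_cases h00 : n = 0 ∧ s₀ = 0
  · obtain ⟨h1, h2⟩ := h00
    refine hh h1 a ?_ rfl
    rw [← hgs]
    have heq : w.edges.get ⟨s₀, hs₀⟩ = w.edges.get ⟨0, by omega⟩ :=
      congrArg w.edges.get (Fin.ext h2)
    rw [heq]
    exact head?_eq_get (by omega)
  · have hwalk : G.IsWalk (G.walkEnd d.first []) (d.edges.take n ++ w.edges.take s₀) := by
      show G.IsWalk d.first _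
      rw [G.isWalk_append]
      refine ⟨DGraph.isWalk_take d.wf n, ?_⟩
      have : G.walkEnd d.first (d.edges.take n) = w.first := hfw
      rw [this]
      exact DGraph.isWalk_take w.wf s₀
    have hend : G.walkEnd (G.walkEnd d.first []) (d.edges.take n ++ w.edges.take s₀)
        = G.walkEnd d.first [] := by
      show G.walkEnd d.first _ = d.first
      rw [DGraph.walkEnd_append']
      have h1 : G.walkEnd d.first (d.edges.take n) = w.first := hfw
      rw [h1]
      have h2 := DGraph.src_get w.wf s₀ hs₀
      rw [hgs] at h2
      rw [← h2, hd']
    have hne : d.edges.take n ++ w.edges.take s₀ ≠ [] := by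
      intro hnil
      have hlen := congrArg List.length hnil
      rw [List.length_append, List.length_take, List.length_take] at hlen
      simp only [List.length_nil] at hlen
      omega
    have hall := circuit_all_a' a d honly (List.mem_cons_self)
      (G.isWalk_nil d.first) hwalk hend hne
    rcases Nat.eq_zero_or_pos n with hn0 | hn0
    · subst hn0
      have hs0 : 0 < s₀ := by omega
      have hmem0 : w.edges.get ⟨0, by omega⟩ ∈ d.edges.take 0 ++ w.edges.take s₀ := by
        simp only [List.take_zero, List.nil_append]
        exact get0_mem_take w.edges hs0 (by omega)
      have := hall _ hmem0
      exact absurd (Nat.find_min hex hs0 ⟨by omega, this⟩) (fun h => h)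
    · have hmemd : ∃ e ∈ d.edges, e = a := by
        have hlt : 0 < d.edges.length := by omega
        refine ⟨d.edges.get ⟨0, hlt⟩, List.get_mem _ _, ?_⟩
        apply hall
        apply List.mem_append_left
        exact get0_mem_take d.edges hn0 hlt
      obtain ⟨e, he, hea⟩ := hmemd
      exact a_not_mem_d a ha m d hd' hm hpre honly (hea ▸ he)


/-! ### Representatives -/

/-- Paths from `b` not starting with `a`. -/
def NB : Set G.DPath := {w | w.first = G.src a ∧ ∀ e, w.edges.head? = some e → e ≠ a}

/-- Paths from `v` avoiding `a` and not starting with an edge of `d`. -/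
def N2 (v : G.V) : Set G.DPath :=
  {t | a ∉ t.edges ∧ t.first = v ∧ ∀ e, t.edges.head? = some e → e ∉ d.edges}

open scoped Classical in
/-- Pairing with a junk value to avoid dependency. -/
noncomputable def mkp (u w : G.DPath) : GIS G :=
  if h : u.first = w.first then GIS.pair u w h else GIS.zero

theorem mkp_pos {u w : G.DPath} (h : u.first = w.first) : mkp u w = GIS.pair u w h := by
  unfold mkp
  rw [dif_pos h]

def R1 : Set (GIS G) :=
  (fun jw : ℕ × G.DPath => mkp (Pp a ha d hd jw.1) jw.2) '' ((Set.Ico 1 m) ×ˢ NB a)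

def R2 : Set (GIS G) :=
  (fun nw : ℕ × G.DPath => mkp (Ds d nw.1) nw.2) ''
    {nw | nw.1 ≤ d.edges.length ∧ nw.2 ∈ N2 a d (G.walkEnd d.first (d.edges.take nw.1))}

/-- Leaf case of the normalization along `d`. -/
theorem surj2_leaf (hd' : d.first = G.src a) (hm : 1 ≤ m)
    (hpre : G.NoCommonPrefix (G.loopPow a ha m) d)
    (honly : ∀ c : G.DPath, G.IsCircuit c →
      (∃ g : G.DPath, g.first ∈ d.vertexList ∧ g.last ∈ c.vertexList) →
      ∀ e ∈ c.edges, e = a)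
    {n : ℕ} (hn : n ≤ d.edges.length) {w₁ : G.DPath} (h : (Ds d n).first = w₁.first)
    (hhead : n = 0 → ∀ e, w₁.edges.head? = some e → e ≠ a)
    (hnostep : ¬ ∃ (hnd : n < d.edges.length) (rest : List G.E),
      w₁.edges = d.edges.get ⟨n, hnd⟩ :: rest) :
    a ∉ w₁.edges ∧ (∀ e, w₁.edges.head? = some e → e ∉ d.edges) := by
  constructor
  · exact no_a a ha m d hd' hm hpre honly hn h hhead
  · intro e he hemem
    obtain ⟨⟨j, hj⟩, hg⟩ := List.mem_iff_get.mp hemem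
    have hsrcj : G.src e = G.walkEnd d.first (d.edges.take j) := by
      rw [← hg]
      exact DGraph.src_get d.wf j hj
    obtain ⟨t, ht⟩ : ∃ t, w₁.edges = e :: t := by
      cases hl : w₁.edges with
      | nil => rw [hl] at he; simp at he
      | cons e' t =>
        rw [hl] at he
        simp at he
        subst he
        exact ⟨t, rfl⟩
    have hsrce : G.src e = w₁.first := by
      have hwf := w₁.wf
      rw [ht, G.isWalk_cons] at hwf
      exact hwf.1
    have hjn : j = n := by
      have hvj := DGraph.vertexList_get d j (by omega)
      have hvn := DGraph.vertexList_get d n (by omega)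
      have heq : d.vertexList.get ⟨j, by rw [vertexList_length]; omega⟩
          = d.vertexList.get ⟨n, by rw [vertexList_length]; omega⟩ := by
        rw [hvj, hvn, ← hsrcj]
        rw [hsrce, ← h]
        rfl
      have hnd := nodup_d a ha m d hd' hm hpre honly
      have := (List.Nodup.get_inj_iff hnd).mp heq
      exact congrArg Fin.val this
    subst hjn
    exact hnostep ⟨hj, t, by rw [ht, ← hg]⟩

/-- Normalization along `d`: any `(d-suffix, w)` coset is represented
by one with tail avoiding `a` and not starting on `d`. -/
theorem surj2 (hd' : d.first = G.src a) (hm : 1 ≤ m)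
    (hpre : G.NoCommonPrefix (G.loopPow a ha m) d)
    (honly : ∀ c : G.DPath, G.IsCircuit c →
      (∃ g : G.DPath, g.first ∈ d.vertexList ∧ g.last ∈ c.vertexList) →
      ∀ e ∈ c.edges, e = a) :
    ∀ (N n : ℕ), n ≤ d.edges.length → ∀ (w₁ : G.DPath) (h : (Ds d n).first = w₁.first),
      w₁.edges.length ≤ N →
      (n = 0 → ∀ e, w₁.edges.head? = some e → e ≠ a) →
      ∃ (n' : ℕ) (w' : G.DPath) (h' : (Ds d n').first = w'.first),
        n' ≤ d.edges.length ∧ a ∉ w'.edges ∧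
        (∀ e, w'.edges.head? = some e → e ∉ d.edges) ∧
        CosL a ha m d (GIS.pair (Ds d n) w₁ h) = CosL a ha m d (GIS.pair (Ds d n') w' h') := by
  intro N
  induction N with
  | zero =>
    intro n hn w₁ h hlen hhead
    have hnostep : ¬ ∃ (hnd : n < d.edges.length) (rest : List G.E),
        w₁.edges = d.edges.get ⟨n, hnd⟩ :: rest := by
      rintro ⟨hnd, rest, hrest⟩
      have := congrArg List.length hrest
      simp at this
      omega
    obtain ⟨h1, h2⟩ := surj2_leaf a ha m d hd' hm hpre honly hn h hhead hnostep
    exact ⟨n, w₁, h, hn, h1, h2, rfl⟩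
  | succ N ih =>
    intro n hn w₁ h hlen hhead
    by_cases hstep : ∃ (hnd : n < d.edges.length) (rest : List G.E),
        w₁.edges = d.edges.get ⟨n, hnd⟩ :: rest
    · obtain ⟨hnd, rest, hrest⟩ := hstep
      have hfw : (Ds d (n+1)).first = G.tgt (d.edges.get ⟨n, hnd⟩) := by
        simp only [Ds_first]
        exact DGraph.walkEnd_take_getLast n hnd
      have hwrest : G.IsWalk (Ds d (n+1)).first rest := by
        have hwf := w₁.wf
        rw [hrest, G.isWalk_cons] at hwf
        rw [hfw]
        exact hwf.2
      set w₁' : G.DPath := ⟨(Ds d (n+1)).first, rest, hwrest⟩ with hw₁'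
      have htake_succ : d.edges.take (n+1)
          = d.edges.take n ++ [d.edges.get ⟨n, hnd⟩] := by
        rw [List.take_succ, List.getElem?_eq_getElem hnd]
        simp
      have e3 : WD a ha d hd' 0 n w₁ h = WD a ha d hd' 0 (n+1) w₁' rfl := by
        refine DGraph.DPath.ext' rfl ?_
        simp only [WD, List.replicate_zero, List.nil_append]
        rw [hrest, htake_succ, List.append_assoc]
        rfl
      have e1 := red1 a ha m d hd' hm hn h
      have e2 := red1 a ha m d hd' hm (show n + 1 ≤ d.edges.length from hnd) (w := w₁') rfl
      have hlen' : w₁'.edges.length ≤ N := by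
        have := congrArg List.length hrest
        simp at this
        simp only [hw₁']
        omega
      obtain ⟨n', w', h', hn', ha', hh', hcos⟩ := ih (n+1) hnd w₁' rfl hlen'
        (fun h0 => absurd h0 (Nat.succ_ne_zero n))
      refine ⟨n', w', h', hn', ha', hh', ?_⟩
      rw [e1, ← hcos, e2]
      exact congrArg _ (pair_congr rfl e3)
    · obtain ⟨h1, h2⟩ := surj2_leaf a ha m d hd' hm hpre honly hn h hhead hstep
      exact ⟨n, w₁, h, hn, h1, h2, rfl⟩


theorem surjP (hm : 1 ≤ m)
    (hpre : G.NoCommonPrefix (G.loopPow a ha m) d)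
    (honly : ∀ c : G.DPath, G.IsCircuit c →
      (∃ g : G.DPath, g.first ∈ d.vertexList ∧ g.last ∈ c.vertexList) →
      ∀ e ∈ c.edges, e = a)
    (i₁ : ℕ) (w : G.DPath) (h : (Pp a ha d hd i₁).first = w.first) :
    ∃ r ∈ R1 a ha m d hd ∪ R2 a d,
      CosL a ha m d (GIS.pair (Pp a ha d hd i₁) w h) = CosL a ha m d r := by
  have hwf : w.first = G.src a := h.symm
  obtain ⟨k, w₀, hw₀, hhead₀, hwWc⟩ := decomp a ha w hwf
  have hstep1 : CosL a ha m d (GIS.pair (Pp a ha d hd i₁) w h)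
      = CosL a ha m d (GIS.pair (Pp a ha d hd i₁) (Wc a ha k w₀ hw₀) rfl) :=
    congrArg _ (pair_congr rfl hwWc)
  set j := (i₁ + k * (m - 1)) % m with hj
  have hkm : k * (m - 1) + k = k * m := by
    rw [← Nat.mul_succ]
    congr 1
    omega
  have hcong : (i₁ + 0) % m = (j + k) % m := by
    rw [Nat.add_zero]
    conv_rhs => rw [hj]
    rw [Nat.mod_add_mod, Nat.add_assoc, hkm, Nat.add_mul_mod_self_right]
  have hstep2 := red2 a ha m d hd hm hw₀ hcong
  by_cases hj1 : 1 ≤ j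
  · have hjm : j < m := by rw [hj]; exact Nat.mod_lt _ (by omega)
    refine ⟨mkp (Pp a ha d hd j) w₀, Or.inl ⟨(j, w₀), ⟨⟨hj1, hjm⟩, hw₀, hhead₀⟩, rfl⟩, ?_⟩
    rw [hstep1, hstep2, mkp_pos (show (Pp a ha d hd j).first = w₀.first from hw₀.symm)]
    refine congrArg _ (pair_congr rfl (DGraph.DPath.ext' ?_ ?_))
    · exact hw₀.symm
    · simp
  · have hj0 : j = 0 := by omega
    rw [hj0] at hstep2
    have hds : Pp a ha d hd 0 = Ds d 0 :=
      DGraph.DPath.ext' (by simpa using hd.symm) (by simp)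
    have hq : (Ds d 0).first = (Wc a ha 0 w₀ hw₀).first := by rw [← hds]; rfl
    have hstep3 : CosL a ha m d (GIS.pair (Pp a ha d hd 0) (Wc a ha 0 w₀ hw₀) rfl)
        = CosL a ha m d (GIS.pair (Ds d 0) (Wc a ha 0 w₀ hw₀) hq) :=
      congrArg _ (pair_congr hds rfl)
    obtain ⟨n', w', h', hn', ha', hh', hcos⟩ :=
      surj2 a ha m d hd hm hpre honly (Wc a ha 0 w₀ hw₀).edges.length 0 (Nat.zero_le _)
        (Wc a ha 0 w₀ hw₀) hq (le_refl _)
        (fun _ e he => hhead₀ e (by simpa using he))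
    refine ⟨mkp (Ds d n') w', Or.inr ⟨(n', w'), ⟨hn', ha', h'.symm, hh'⟩, rfl⟩, ?_⟩
    rw [hstep1, hstep2, hstep3, hcos, mkp_pos h']

theorem surj (hm : 1 ≤ m)
    (hpre : G.NoCommonPrefix (G.loopPow a ha m) d)
    (honly : ∀ c : G.DPath, G.IsCircuit c →
      (∃ g : G.DPath, g.first ∈ d.vertexList ∧ g.last ∈ c.vertexList) →
      ∀ e ∈ c.edges, e = a)
    (t : GIS G) (ht : t * t.inv ∈ cycleSet G (G.loopPow a ha m) d) :
    ∃ r ∈ R1 a ha m d hd ∪ R2 a d, CosL a ha m d t = CosL a ha m d r := by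
  cases t with
  | zero =>
    exfalso
    have h0 : (GIS.zero : GIS G) * (GIS.zero : GIS G).inv = GIS.zero := rfl
    rw [h0] at ht
    rcases (memL_iff a ha m d hd hm _).mp ht with ⟨_, _, _, heq⟩ | ⟨_, _, heq⟩ <;>
      cases heq
  | pair u w h =>
    rw [mul_self_inv] at ht
    rcases (memL_iff a ha m d hd hm _).mp ht with ⟨i₁, i₂, hmod, heq⟩ | ⟨n, hn, heq⟩
    · have hu := (pair_inj heq).1
      have hfw : (Pp a ha d hd i₁).first = w.first := by rw [← hu]; exact h
      have hP : GIS.pair u w h = GIS.pair (Pp a ha d hd i₁) w hfw := pair_congr hu rfl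
      obtain ⟨r, hr, hc⟩ := surjP a ha m d hd hm hpre honly i₁ w hfw
      exact ⟨r, hr, by rw [hP]; exact hc⟩
    · have hu := (pair_inj heq).1
      have hfw : (Ds d n).first = w.first := by rw [← hu]; exact h
      have hP : GIS.pair u w h = GIS.pair (Ds d n) w hfw := pair_congr hu rfl
      have hred := red1 a ha m d hd hm hn hfw
      obtain ⟨r, hr, hc⟩ := surjP a ha m d hd hm hpre honly 0 (WD a ha d hd 0 n w hfw) rfl
      exact ⟨r, hr, by rw [hP, hred]; exact hc⟩


/-! ### Injectivity lemmas -/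

theorem H1 {z l : List G.E} {i' j' : ℕ}
    (h : List.replicate i' a ++ l = z ++ (List.replicate j' a ++ l)) :
    j' ≤ i' ∧ z = List.replicate (i' - j') a := by
  have hlen := congrArg List.length h
  simp only [List.length_append, List.length_replicate] at hlen
  refine ⟨by omega, ?_⟩
  have h2 : z = (z ++ (List.replicate j' a ++ l)).take z.length :=
    (List.take_left (l₁ := z)).symm
  rw [← h] at h2
  rw [h2, List.take_append, List.take_replicate,
    Nat.min_eq_left (by omega : z.length ≤ i'), List.length_replicate,
    (by omega : z.length - i' = 0), List.take_zero, List.append_nil]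
  congr 1
  omega

theorem repl_head {c c' : ℕ} {l l' : List G.E}
    (h : List.replicate c a ++ l = List.replicate c' a ++ l') (hlt : c < c') :
    l.head? = some a := by
  have h2 : List.replicate c' a = List.replicate c a ++ List.replicate (c' - c) a := by
    rw [← List.replicate_add]
    congr 1
    omega
  rw [h2, List.append_assoc] at h
  have h3 := List.append_cancel_left h
  rw [(by omega : c' - c = (c' - c - 1) + 1), List.replicate_succ] at h3
  rw [h3]
  rfl

theorem H2 {c c' : ℕ} {l l' : List G.E}
    (h : List.replicate c a ++ l = List.replicate c' a ++ l')
    (hl : ∀ e, l.head? = some e → e ≠ a) (hl' : ∀ e, l'.head? = some e → e ≠ a) :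
    c = c' ∧ l = l' := by
  have hcc : c = c' := by
    by_contra hne
    rcases Nat.lt_or_ge c c' with hlt | hge
    · exact hl a (repl_head a h hlt) rfl
    · exact hl' a (repl_head a h.symm (by omega)) rfl
  subst hcc
  exact ⟨rfl, List.append_cancel_left h⟩

theorem take_head {l₀ : List G.E} {u u' : ℕ} (hu' : u' ≤ l₀.length) (hlt : u < u')
    {l l' : List G.E} (h : l₀.take u ++ l = l₀.take u' ++ l') :
    ∃ e ∈ l₀, l.head? = some e := by
  have h2 : l₀.take u' = l₀.take u ++ (l₀.drop u).take (u' - u) := by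
    rw [← List.take_add, Nat.add_sub_cancel' (le_of_lt hlt)]
  rw [h2, List.append_assoc] at h
  have h3 := List.append_cancel_left h
  have hul : u < l₀.length := by omega
  refine ⟨l₀.get ⟨u, hul⟩, List.get_mem _ _, ?_⟩
  rw [h3, (by omega : u' - u = (u' - u - 1) + 1), List.drop_eq_getElem_cons hul,
    List.take_succ_cons]
  simp

theorem H3 {l₀ : List G.E} {u u' : ℕ} (hu : u ≤ l₀.length) (hu' : u' ≤ l₀.length)
    {l l' : List G.E} (h : l₀.take u ++ l = l₀.take u' ++ l')
    (hl : ∀ e, l.head? = some e → e ∉ l₀) (hl' : ∀ e, l'.head? = some e → e ∉ l₀) :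
    u = u' ∧ l = l' := by
  have huu : u = u' := by
    by_contra hne
    rcases Nat.lt_or_ge u u' with hlt | hge
    · obtain ⟨e, he, hh⟩ := take_head hu' hlt h
      exact hl e hh he
    · obtain ⟨e, he, hh⟩ := take_head hu (by omega) h.symm
      exact hl' e hh he
  subst huu
  exact ⟨rfl, List.append_cancel_left h⟩

theorem tail_head_ne_a (hd' : d.first = G.src a) (hm : 1 ≤ m)
    (hpre : G.NoCommonPrefix (G.loopPow a ha m) d)
    (honly : ∀ c : G.DPath, G.IsCircuit c →
      (∃ g : G.DPath, g.first ∈ d.vertexList ∧ g.last ∈ c.vertexList) →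
      ∀ e ∈ c.edges, e = a)
    {n : ℕ} {w₁ : G.DPath} (hna : a ∉ w₁.edges) :
    ∀ e, (d.edges.take n ++ w₁.edges).head? = some e → e ≠ a := by
  intro e he
  have hmem := List.mem_of_mem_head? he
  rcases List.mem_append.mp hmem with h1 | h1
  · intro hea
    exact a_not_mem_d a ha m d hd' hm hpre honly (hea ▸ List.take_subset n d.edges h1)
  · intro hea
    exact hna (hea ▸ h1)

theorem I11 (hm : 1 ≤ m) {j j' : ℕ} (hj1 : 1 ≤ j) (hjm : j < m) (hj1' : 1 ≤ j')
    (hjm' : j' < m) {w₀ w₀' : G.DPath} (hw₀ : w₀.first = G.src a)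
    (hw₀' : w₀'.first = G.src a)
    (hh₀ : ∀ e, w₀.edges.head? = some e → e ≠ a)
    (hh₀' : ∀ e, w₀'.edges.head? = some e → e ≠ a)
    {x : GIS G} (hx : x ∈ cycleSet G (G.loopPow a ha m) d)
    {h : (Pp a ha d hd j).first = w₀.first} {h' : (Pp a ha d hd j').first = w₀'.first}
    (hle : GIS.le (x * GIS.pair (Pp a ha d hd j) w₀ h) (GIS.pair (Pp a ha d hd j') w₀' h')) :
    j = j' ∧ w₀ = w₀' := by
  obtain ⟨I, C, hIC, hxt⟩ := gen a ha m d hd hm hx j h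
  rw [hxt] at hle
  obtain ⟨z, hz1, hz2, -⟩ := le_pair_dest hle
  simp only [Pp_edges, Wc_edges] at hz1 hz2
  obtain ⟨hji, hz⟩ := H1 a hz1
  rw [hz] at hz2
  obtain ⟨hC, hw⟩ := H2 a hz2 hh₀ hh₀'
  have hweq : w₀ = w₀' := DGraph.DPath.ext' (by rw [hw₀, hw₀']) hw
  refine ⟨?_, hweq⟩
  have hIj : I = C + j' := by omega
  rw [hIj] at hIC
  have hjj := Nat.ModEq.add_left_cancel' C hIC.symm
  rwa [Nat.ModEq, Nat.mod_eq_of_lt hjm, Nat.mod_eq_of_lt hjm'] at hjj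

theorem I12 (hm : 1 ≤ m)
    (hpre : G.NoCommonPrefix (G.loopPow a ha m) d)
    (honly : ∀ c : G.DPath, G.IsCircuit c →
      (∃ g : G.DPath, g.first ∈ d.vertexList ∧ g.last ∈ c.vertexList) →
      ∀ e ∈ c.edges, e = a)
    {j : ℕ} (hj1 : 1 ≤ j) (hjm : j < m) {w₀ : G.DPath}
    (hh₀ : ∀ e, w₀.edges.head? = some e → e ≠ a)
    {n : ℕ} (hn : n ≤ d.edges.length) {w₁ : G.DPath} (hna : a ∉ w₁.edges)
    {x : GIS G} (hx : x ∈ cycleSet G (G.loopPow a ha m) d)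
    {h : (Pp a ha d hd j).first = w₀.first} {h' : (Ds d n).first = w₁.first}
    (hle : GIS.le (x * GIS.pair (Pp a ha d hd j) w₀ h) (GIS.pair (Ds d n) w₁ h')) :
    False := by
  obtain ⟨I, C, hIC, hxt⟩ := gen a ha m d hd hm hx j h
  rw [hxt] at hle
  obtain ⟨z, hz1, hz2, -⟩ := le_pair_dest hle
  simp only [Pp_edges, Wc_edges, Ds_edges] at hz1 hz2
  have hz : z = List.replicate I a ++ d.edges.take n := by
    have h2 : List.replicate I a ++ d.edges
        = (List.replicate I a ++ d.edges.take n) ++ d.edges.drop n := by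
      rw [List.append_assoc, List.take_append_drop]
    rw [h2] at hz1
    exact (List.append_cancel_right hz1).symm 
  rw [hz, List.append_assoc] at hz2
  obtain ⟨hCI, -⟩ := H2 a hz2 hh₀
    (tail_head_ne_a a ha m d hd hm hpre honly hna)
  subst hCI
  have hcontra := Nat.ModEq.add_left_cancel' C (show (C + 0) % m = (C + j) % m by
    rw [Nat.add_zero]; exact hIC)
  rw [Nat.ModEq, Nat.zero_mod] at hcontra
  have : j % m = j := Nat.mod_eq_of_lt hjm
  omega

theorem I22 (hd' : d.first = G.src a) (hm : 1 ≤ m)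
    (hpre : G.NoCommonPrefix (G.loopPow a ha m) d)
    (honly : ∀ c : G.DPath, G.IsCircuit c →
      (∃ g : G.DPath, g.first ∈ d.vertexList ∧ g.last ∈ c.vertexList) →
      ∀ e ∈ c.edges, e = a)
    {n : ℕ} (hn : n ≤ d.edges.length) {w₁ : G.DPath} (hna : a ∉ w₁.edges)
    (hh₁ : ∀ e, w₁.edges.head? = some e → e ∉ d.edges)
    {n' : ℕ} (hn' : n' ≤ d.edges.length) {w₁' : G.DPath} (hna' : a ∉ w₁'.edges)
    (hh₁' : ∀ e, w₁'.edges.head? = some e → e ∉ d.edges)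
    {x : GIS G} (hx : x ∈ cycleSet G (G.loopPow a ha m) d)
    {h : (Ds d n).first = w₁.first} {h' : (Ds d n').first = w₁'.first}
    (hle : GIS.le (x * GIS.pair (Ds d n) w₁ h) (GIS.pair (Ds d n') w₁' h')) :
    n = n' ∧ w₁ = w₁' := by
  have hfin : ∀ (hres : n = n'), w₁.edges = w₁'.edges → n = n' ∧ w₁ = w₁' := by
    intro hres hedge
    refine ⟨hres, DGraph.DPath.ext' ?_ hedge⟩
    rw [← h, ← h', hres]
  have hheadsub : ∀ {nn : ℕ} {ww : G.DPath}, (∀ e, ww.edges.head? = some e → e ∉ d.edges) →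
      ∀ e, ww.edges.head? = some e → e ∉ (d.edges.drop nn) := by
    intro nn ww hcnd e he hmem
    exact hcnd e he (List.drop_subset nn d.edges hmem)
  rcases (memL_iff a ha m d hd' hm x).mp hx with ⟨i₁, i₂, hmod, rfl⟩ | ⟨n₀, hn₀, rfl⟩
  · rw [M4 a ha d hd' hn i₁ i₂ h] at hle
    obtain ⟨z, hz1, hz2, -⟩ := le_pair_dest hle
    simp only [Pp_edges, WD_edges, Ds_edges] at hz1 hz2
    have hz : z = List.replicate i₁ a ++ d.edges.take n' := by
      have h2 : List.replicate i₁ a ++ d.edges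
          = (List.replicate i₁ a ++ d.edges.take n') ++ d.edges.drop n' := by
        rw [List.append_assoc, List.take_append_drop]
      rw [h2] at hz1
      exact (List.append_cancel_right hz1).symm
    rw [hz, List.append_assoc] at hz2
    obtain ⟨-, htkeq⟩ := H2 a hz2
      (tail_head_ne_a a ha m d hd' hm hpre honly hna)
      (tail_head_ne_a a ha m d hd' hm hpre honly hna')
    obtain ⟨hnn, hww⟩ := H3 hn hn' htkeq hh₁ hh₁'
    exact hfin hnn hww
  · by_cases hcmp : n₀ ≤ n
    · rw [M5 d hcmp hn h] at hle
      obtain ⟨z, hz1, hz2, -⟩ := le_pair_dest hle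
      simp only [Ds_edges] at hz1 hz2
      have hlen := congrArg List.length hz1
      simp only [List.length_append, List.length_drop] at hlen
      have hn₀n' : n₀ ≤ n' := by omega
      have hz : z = (d.edges.drop n₀).take (n' - n₀) := by
        have h2 : d.edges.drop n₀
            = (d.edges.drop n₀).take (n' - n₀) ++ d.edges.drop n' := by
          conv_lhs => rw [← List.take_append_drop (n' - n₀) (d.edges.drop n₀)]
          rw [List.drop_drop, Nat.add_sub_cancel' hn₀n']
        rw [h2] at hz1
        exact (List.append_cancel_right hz1).symm
      rw [hz] at hz2
      obtain ⟨hnn, hww⟩ := H3 (l₀ := d.edges.drop n₀)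
        (by simp [List.length_drop]; omega) (by simp [List.length_drop]; omega) hz2
        (hheadsub hh₁) (hheadsub hh₁')
      exact hfin (by omega) hww
    · rw [M6 d (by omega) hn₀ h] at hle
      obtain ⟨z, hz1, hz2, -⟩ := le_pair_dest hle
      simp only [Ds_edges] at hz1 hz2
      have hlen := congrArg List.length hz1
      simp only [List.length_append, List.length_drop] at hlen
      have hnn' : n ≤ n' := by omega
      have hz : z = (d.edges.drop n).take (n' - n) := by
        have h2 : d.edges.drop n
            = (d.edges.drop n).take (n' - n) ++ d.edges.drop n' := by
          conv_lhs => rw [← List.take_append_drop (n' - n) (d.edges.drop n)]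
          rw [List.drop_drop, Nat.add_sub_cancel' hnn']
        rw [h2] at hz1
        exact (List.append_cancel_right hz1).symm
      rw [hz] at hz2
      have hz2' : (d.edges.drop n).take 0 ++ w₁.edges
          = (d.edges.drop n).take (n' - n) ++ w₁'.edges := by
        simpa using hz2
      obtain ⟨hnn, hww⟩ := H3 (l₀ := d.edges.drop n)
        (by simp) (by simp [List.length_drop]; omega) hz2'
        (hheadsub hh₁) (hheadsub hh₁')
      exact hfin (by omega) hww


theorem self_mem {u w : G.DPath} (h : u.first = w.first)
    (hu : GIS.pair u u rfl ∈ cycleSet G (G.loopPow a ha m) d) :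
    GIS.pair u w h ∈ CosL a ha m d (GIS.pair u w h) :=
  ⟨_, hu, by rw [mul_pair_self]; exact le_refl' _⟩

theorem inj (hm : 1 ≤ m)
    (hpre : G.NoCommonPrefix (G.loopPow a ha m) d)
    (honly : ∀ c : G.DPath, G.IsCircuit c →
      (∃ g : G.DPath, g.first ∈ d.vertexList ∧ g.last ∈ c.vertexList) →
      ∀ e ∈ c.edges, e = a) :
    ∀ r ∈ R1 a ha m d hd ∪ R2 a d, ∀ r' ∈ R1 a ha m d hd ∪ R2 a d,
      CosL a ha m d r = CosL a ha m d r' → r = r' := by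
  rintro r hr r' hr' hC
  rcases hr with ⟨⟨j, w₀⟩, ⟨⟨hj1, hjm⟩, hw₀, hh₀⟩, rfl⟩ | ⟨⟨n, w₁⟩, ⟨hn, hna, hfw, hh₁⟩, rfl⟩ <;>
    rcases hr' with ⟨⟨j', w₀'⟩, ⟨⟨hj1', hjm'⟩, hw₀', hh₀'⟩, rfl⟩ |
      ⟨⟨n', w₁'⟩, ⟨hn', hna', hfw', hh₁'⟩, rfl⟩
  · -- R1 vs R1
    dsimp only at *
    have hpf : (Pp a ha d hd j).first = w₀.first := hw₀.symm
    have hpf' : (Pp a ha d hd j').first = w₀'.first := hw₀'.symm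
    rw [mkp_pos hpf, mkp_pos hpf'] at hC ⊢
    have hself := self_mem a ha m d hpf'
      ((memL_iff a ha m d hd hm _).mpr (Or.inl ⟨j', j', rfl, rfl⟩))
    rw [← hC] at hself
    obtain ⟨x, hx, hle⟩ := hself
    obtain ⟨hjj, hww⟩ := I11 a ha m d hd hm hj1 hjm hj1' hjm' hw₀ hw₀' hh₀ hh₀' hx hle
    exact pair_congr (by rw [hjj]) hww
  · -- R1 vs R2
    dsimp only at *
    exfalso
    have hpf : (Pp a ha d hd j).first = w₀.first := hw₀.symm
    have hpf' : (Ds d n').first = w₁'.first := hfw'.symm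
    rw [mkp_pos hpf, mkp_pos hpf'] at hC
    have hself := self_mem a ha m d hpf'
      ((memL_iff a ha m d hd hm _).mpr (Or.inr ⟨n', hn', rfl⟩))
    rw [← hC] at hself
    obtain ⟨x, hx, hle⟩ := hself
    exact I12 a ha m d hd hm hpre honly hj1 hjm hh₀ hn' hna' hx hle
  · -- R2 vs R1
    dsimp only at *
    exfalso
    have hpf : (Ds d n).first = w₁.first := hfw.symm
    have hpf' : (Pp a ha d hd j').first = w₀'.first := hw₀'.symm
    rw [mkp_pos hpf, mkp_pos hpf'] at hC
    have hself := self_mem a ha m d hpf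
      ((memL_iff a ha m d hd hm _).mpr (Or.inr ⟨n, hn, rfl⟩))
    rw [hC] at hself
    obtain ⟨x, hx, hle⟩ := hself
    exact I12 a ha m d hd hm hpre honly hj1' hjm' hh₀' hn hna hx hle
  · -- R2 vs R2
    dsimp only at *
    have hpf : (Ds d n).first = w₁.first := hfw.symm
    have hpf' : (Ds d n').first = w₁'.first := hfw'.symm
    rw [mkp_pos hpf, mkp_pos hpf'] at hC ⊢
    have hself := self_mem a ha m d hpf'
      ((memL_iff a ha m d hd hm _).mpr (Or.inr ⟨n', hn', rfl⟩))
    rw [← hC] at hself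
    obtain ⟨x, hx, hle⟩ := hself
    obtain ⟨hnn, hww⟩ := I22 a ha m d hd hm hpre honly hn hna hh₁ hn' hna' hh₁' hx hle
    exact pair_congr (by rw [hnn]) hww


/-! ### Finiteness and counting -/

theorem finite_len [Fintype G.V] [Fintype G.E] (N : ℕ) :
    {w : G.DPath | w.edges.length ≤ N}.Finite := by
  have h1 : ((fun w : G.DPath => (w.first, w.edges)) '' {w | w.edges.length ≤ N}).Finite := by
    apply Set.Finite.subset (Set.Finite.prod Set.finite_univ (List.finite_length_le G.E N))
    rintro ⟨v, l⟩ ⟨w, hw, heq⟩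
    refine ⟨Set.mem_univ _, ?_⟩
    have : w.edges = l := congrArg Prod.snd heq
    rw [← this]
    exact hw
  exact Set.Finite.of_finite_image h1
    (fun w₁ _ w₂ _ he => DGraph.DPath.ext' (congrArg Prod.fst he) (congrArg Prod.snd he))

theorem finite_nodup [Fintype G.V] [Fintype G.E] :
    {w : G.DPath | w.vertexList.Nodup}.Finite := by
  apply Set.Finite.subset (finite_len (Fintype.card G.V))
  intro w hw
  have h1 := List.Nodup.length_le_card hw
  rw [vertexList_length] at h1
  show w.edges.length ≤ _
  omega

theorem finite_NB [Fintype G.V] [Fintype G.E] (hd' : d.first = G.src a)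
    (honly : ∀ c : G.DPath, G.IsCircuit c →
      (∃ g : G.DPath, g.first ∈ d.vertexList ∧ g.last ∈ c.vertexList) →
      ∀ e ∈ c.edges, e = a) :
    (NB a).Finite :=
  Set.Finite.subset (finite_nodup)
    (fun w hw => nodup1 a d hd' honly w hw.1 hw.2)

theorem finite_N2 [Fintype G.V] [Fintype G.E]
    (honly : ∀ c : G.DPath, G.IsCircuit c →
      (∃ g : G.DPath, g.first ∈ d.vertexList ∧ g.last ∈ c.vertexList) →
      ∀ e ∈ c.edges, e = a)
    {v : G.V} (hv : v ∈ d.vertexList) :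
    (N2 a d v).Finite :=
  Set.Finite.subset (finite_nodup)
    (fun t ht => nodup2 a d honly t (ht.2.1 ▸ hv) ht.1)

theorem R1count [Fintype G.V] [Fintype G.E] (hd' : d.first = G.src a)
    (honly : ∀ c : G.DPath, G.IsCircuit c →
      (∃ g : G.DPath, g.first ∈ d.vertexList ∧ g.last ∈ c.vertexList) →
      ∀ e ∈ c.edges, e = a) :
    (R1 a ha m d hd).Finite ∧ (R1 a ha m d hd).ncard = (m - 1) * (NB a).ncard := by
  have hfinNB := finite_NB a d hd' honly
  have hprodfin : ((Set.Ico 1 m) ×ˢ NB a).Finite :=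
    Set.Finite.prod (Set.finite_Ico 1 m) hfinNB
  have hinj : Set.InjOn (fun jw : ℕ × G.DPath => mkp (Pp a ha d hd jw.1) jw.2)
      ((Set.Ico 1 m) ×ˢ NB a) := by
    rintro ⟨j, w⟩ h1 ⟨j', w'⟩ h2 heq
    dsimp only at heq
    have hw : w.first = G.src a := h1.2.1
    have hw' : w'.first = G.src a := h2.2.1
    rw [mkp_pos hw.symm, mkp_pos hw'.symm] at heq
    obtain ⟨hPp, hww⟩ := pair_inj heq
    have hlen := congrArg List.length (edges_congr hPp)
    simp only [Pp_edges, List.length_append, List.length_replicate] at hlen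
    have : j = j' := by omega
    rw [this, hww]
  constructor
  · exact Set.Finite.image _ hprodfin
  · rw [show R1 a ha m d hd
        = (fun jw : ℕ × G.DPath => mkp (Pp a ha d hd jw.1) jw.2) ''
          ((Set.Ico 1 m) ×ˢ NB a) from rfl]
    rw [Set.ncard_image_of_injOn hinj]
    rw [Set.ncard_eq_toFinset_card _ hprodfin]
    rw [← Set.Finite.toFinset_prod (Set.finite_Ico 1 m) hfinNB, Finset.card_product]
    congr 1
    · rw [← Set.ncard_eq_toFinset_card _ (Set.finite_Ico 1 m)]
      rw [← Finset.coe_Ico, Set.ncard_coe_finset, Nat.card_Ico]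
    · rw [← Set.ncard_eq_toFinset_card _ hfinNB]

/-- The slices of `R2`. -/
def FF (K : ℕ) : Set (GIS G) :=
  (fun nw : ℕ × G.DPath => mkp (Ds d nw.1) nw.2) ''
    {nw | nw.1 < K ∧ nw.2 ∈ N2 a d (G.walkEnd d.first (d.edges.take nw.1))}

theorem R2count [Fintype G.V] [Fintype G.E] (hd' : d.first = G.src a) (hm : 1 ≤ m)
    (hpre : G.NoCommonPrefix (G.loopPow a ha m) d)
    (honly : ∀ c : G.DPath, G.IsCircuit c →
      (∃ g : G.DPath, g.first ∈ d.vertexList ∧ g.last ∈ c.vertexList) →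
      ∀ e ∈ c.edges, e = a) :
    (R2 a d).Finite ∧ (R2 a d).ncard
      = ∑ n ∈ Finset.range (d.edges.length + 1),
          (N2 a d (G.walkEnd d.first (d.edges.take n))).ncard := by
  have H : ∀ K, K ≤ d.edges.length + 1 → (FF a d K).Finite ∧ (FF a d K).ncard
      = ∑ n ∈ Finset.range K, (N2 a d (G.walkEnd d.first (d.edges.take n))).ncard := by
    intro K
    induction K with
    | zero =>
      intro _
      have h0 : FF a d 0 = ∅ := by
        ext x
        simp only [FF, Set.mem_image, Set.mem_setOf_eq, Set.mem_empty_iff_false, iff_false]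
        rintro ⟨⟨n, w⟩, ⟨hlt, -⟩, -⟩
        exact Nat.not_lt_zero n hlt
      rw [h0]
      simp
    | succ K ih =>
      intro hK
      have hKlen : K ≤ d.edges.length := by omega
      have hvK : G.walkEnd d.first (d.edges.take K) ∈ d.vertexList := by
        rw [← DGraph.vertexList_get d K (by omega)]
        exact List.get_mem _ _
      have split : FF a d (K+1) = FF a d K ∪
          (fun w => mkp (Ds d K) w) '' (N2 a d (G.walkEnd d.first (d.edges.take K))) := by
        ext x
        constructor
        · rintro ⟨⟨n, w⟩, ⟨hlt, hmem⟩, rfl⟩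
          rcases Nat.lt_or_ge n K with h | h
          · exact Or.inl ⟨(n, w), ⟨h, hmem⟩, rfl⟩
          · have : n = K := by omega
            subst this
            exact Or.inr ⟨w, hmem, rfl⟩
        · rintro (⟨⟨n, w⟩, ⟨hlt, hmem⟩, rfl⟩ | ⟨w, hmem, rfl⟩)
          · exact ⟨(n, w), ⟨by omega, hmem⟩, rfl⟩
          · exact ⟨(K, w), ⟨by omega, hmem⟩, rfl⟩
      have hfinN2 := finite_N2 a d honly hvK
      have hfin2 : ((fun w => mkp (Ds d K) w) ''
          (N2 a d (G.walkEnd d.first (d.edges.take K)))).Finite :=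
        Set.Finite.image _ hfinN2
      obtain ⟨ihf, ihc⟩ := ih (by omega)
      have hdisj : Disjoint (FF a d K)
          ((fun w => mkp (Ds d K) w) '' (N2 a d (G.walkEnd d.first (d.edges.take K)))) := by
        rw [Set.disjoint_left]
        rintro x ⟨⟨n, w⟩, ⟨hlt, hm1⟩, rfl⟩ ⟨w', hm2, heq⟩
        dsimp only at heq
        have hpf : (Ds d n).first = w.first := (hm1.2.1).symm
        have hpf' : (Ds d K).first = w'.first := (hm2.2.1).symm
        rw [mkp_pos hpf, mkp_pos hpf'] at heq
        obtain ⟨hDs, -⟩ := pair_inj heq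
        have hlen := congrArg List.length (edges_congr hDs)
        simp only [Ds_edges, List.length_drop] at hlen
        omega
      have himg : ((fun w => mkp (Ds d K) w) ''
          (N2 a d (G.walkEnd d.first (d.edges.take K)))).ncard
          = (N2 a d (G.walkEnd d.first (d.edges.take K))).ncard := by
        apply Set.ncard_image_of_injOn
        intro w1 hw1 w2 hw2 heq
        dsimp only at heq
        rw [mkp_pos (hw1.2.1).symm, mkp_pos (hw2.2.1).symm] at heq
        exact (pair_inj heq).2
      refine ⟨by rw [split]; exact ihf.union hfin2, ?_⟩
      rw [split, Set.ncard_union_eq hdisj ihf hfin2, ihc, himg, Finset.sum_range_succ]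
  have hR2 : R2 a d = FF a d (d.edges.length + 1) := by
    ext x
    simp only [R2, FF, Set.mem_image, Set.mem_setOf_eq]
    constructor
    · rintro ⟨⟨n, w⟩, ⟨hn, hmem⟩, rfl⟩
      exact ⟨(n, w), ⟨by omega, hmem⟩, rfl⟩
    · rintro ⟨⟨n, w⟩, ⟨hn, hmem⟩, rfl⟩
      exact ⟨(n, w), ⟨by omega, hmem⟩, rfl⟩
  obtain ⟨hf, hc⟩ := H (d.edges.length + 1) (le_refl _)
  rw [hR2]
  exact ⟨hf, hc⟩

theorem disjR (hd' : d.first = G.src a) :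
    Disjoint (R1 a ha m d hd) (R2 a d) := by
  rw [Set.disjoint_left]
  rintro x ⟨⟨j, w⟩, ⟨⟨hj1, -⟩, hw, -⟩, rfl⟩ ⟨⟨n, w'⟩, ⟨hn, hm2⟩, heq⟩
  dsimp only at heq hj1 hw ⊢
  have hpf : (Pp a ha d hd j).first = w.first := hw.symm
  have hpf' : (Ds d n).first = w'.first := (hm2.2.1).symm
  rw [mkp_pos hpf', mkp_pos hpf] at heq
  obtain ⟨hDs, -⟩ := pair_inj heq
  have hlen := congrArg List.length (edges_congr hDs)
  simp only [Ds_edges, Pp_edges, List.length_drop, List.length_append,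
    List.length_replicate] at hlen
  omega

theorem cosets_eq (hm : 1 ≤ m)
    (hpre : G.NoCommonPrefix (G.loopPow a ha m) d)
    (honly : ∀ c : G.DPath, G.IsCircuit c →
      (∃ g : G.DPath, g.first ∈ d.vertexList ∧ g.last ∈ c.vertexList) →
      ∀ e ∈ c.edges, e = a) :
    cosets G (cycleSet G (G.loopPow a ha m) d)
      = (CosL a ha m d) '' (R1 a ha m d hd ∪ R2 a d) := by
  ext C
  constructor
  · rintro ⟨t, ht, rfl⟩
    obtain ⟨r, hrR, hc⟩ := surj a ha m d hd hm hpre honly t ht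
    exact ⟨r, hrR, hc.symm⟩
  · rintro ⟨r, hrR, rfl⟩
    rcases hrR with ⟨⟨j, w₀⟩, ⟨-, hw₀, -⟩, rfl⟩ | ⟨⟨n, w₁⟩, ⟨hn, hm2⟩, rfl⟩
    · dsimp only
      refine ⟨mkp (Pp a ha d hd j) w₀, ?_, rfl⟩
      rw [mkp_pos (show (Pp a ha d hd j).first = w₀.first from hw₀.symm), mul_self_inv]
      exact (memL_iff a ha m d hd hm _).mpr (Or.inl ⟨j, j, rfl, rfl⟩)
    · dsimp only
      refine ⟨mkp (Ds d n) w₁, ?_, rfl⟩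
      rw [mkp_pos (show (Ds d n).first = w₁.first from (hm2.2.1).symm), mul_self_inv]
      exact (memL_iff a ha m d hd hm _).mpr (Or.inr ⟨n, hn, rfl⟩)

end S19

/-- for a loop `a`, if apart from powers of `a` there is no directed
circuit accessible from a vertex of `d`, then `L_{a^m,d}` has finite index, equal to
`(m-1) · N^Γ_{b,a} + Σ_{v ∈ V(d)} N^{Γ∖{a}}_{v,d}`. -/
theorem stmt_19 (G : DGraph) [Fintype G.V] [Fintype G.E] [DecidableEq G.V]
    (a : G.E) (ha : G.tgt a = G.src a) (m : ℕ) (hm : 1 ≤ m)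
    (d : G.DPath) (hd : d.first = G.src a)
    (hpre : G.NoCommonPrefix (G.loopPow a ha m) d)
    (honly : ∀ c : G.DPath, G.IsCircuit c →
      (∃ g : G.DPath, g.first ∈ d.vertexList ∧ g.last ∈ c.vertexList) →
      ∀ e ∈ c.edges, e = a) :
    (cosets G (cycleSet G (G.loopPow a ha m) d)).Finite ∧
    (cosets G (cycleSet G (G.loopPow a ha m) d)).ncard =
      (m - 1) * {t : G.DPath | t.first = G.src a ∧
                  ∀ e, t.edges.head? = some e → e ≠ a}.ncard +
        ∑ v ∈ d.vertexList.toFinset,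
          {t : G.DPath | a ∉ t.edges ∧ t.first = v ∧
            ∀ e, t.edges.head? = some e → e ∉ d.edges}.ncard := by
  classical
  have hco := S19.cosets_eq a ha m d hd hm hpre honly
  have hR1 := S19.R1count a ha m d hd hd honly
  have hR2 := S19.R2count a ha m d hd hm hpre honly
  have hdisj := S19.disjR a ha m d hd hd
  have hinj : Set.InjOn (S19.CosL a ha m d) (S19.R1 a ha m d hd ∪ S19.R2 a d) :=
    fun r hr r' hr' h => S19.inj a ha m d hd hm hpre honly r hr r' hr' h
  have hnd := S19.nodup_d a ha m d hd hm hpre honly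
  have hsum : ∑ n ∈ Finset.range (d.edges.length + 1),
        (S19.N2 a d (G.walkEnd d.first (d.edges.take n))).ncard
      = ∑ v ∈ d.vertexList.toFinset,
          {t : G.DPath | a ∉ t.edges ∧ t.first = v ∧
            ∀ e, t.edges.head? = some e → e ∉ d.edges}.ncard := by
    refine Finset.sum_bij
      (fun n hn => d.vertexList.get ⟨n, by
        rw [S19.vertexList_length]
        exact Finset.mem_range.mp hn⟩) ?_ ?_ ?_ ?_
    · intro n hn
      exact List.mem_toFinset.mpr (List.get_mem _ _)
    · intro n1 h1 n2 h2 heq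
      have h3 := (List.Nodup.get_inj_iff hnd).mp heq
      exact congrArg Fin.val h3
    · intro v hv
      obtain ⟨⟨n, hn⟩, hg⟩ := List.mem_iff_get.mp (List.mem_toFinset.mp hv)
      refine ⟨n, Finset.mem_range.mpr (by rw [S19.vertexList_length] at hn; omega), ?_⟩
      exact hg
    · intro n hn
      have hvg := DGraph.vertexList_get d n (Finset.mem_range.mp hn)
      rw [← hvg]
      rfl
  constructor
  · rw [hco]
    exact Set.Finite.image _ (Set.Finite.union hR1.1 hR2.1)
  · rw [hco, Set.ncard_image_of_injOn hinj, Set.ncard_union_eq hdisj hR1.1 hR2.1,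
      hR1.2, hR2.2, hsum]
    rfl
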